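/- arXiv:1809.09726 — 5 statements merged into one kernel-verified Lean document; each statement's English description precedes it below -/
import Mathlib

section
/- Let n ≥ 1 be an integer, 0 < s < 2π, and c₀, c₁ ∈ ℝ. Then there exists a polynomial P of degree exactly n with complex coefficients such that P(e^{iz}) = e^{i(nz/2 + c₁)} · 𝔗_n(sec(s/4) · cos((z − c₀)/2)) for every z ∈ ℝ. -/
open MeasureTheory Polynomial

noncomputable def extP (α β : ℂ) : ℕ → Polynomial ℂ
  | 0 => 1
  | 1 => Polynomial.C (α / 2) * Polynomial.X + Polynomial.C (β / 2)
  | n + 2 => (Polynomial.C α * Polynomial.X + Polynomial.C β) * extP α β (n + 1)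
      - Polynomial.X * extP α β n

lemma extP_natDegree_le (α β : ℂ) : ∀ n, (extP α β n).natDegree ≤ n
  | 0 => by simp [extP]
  | 1 => by
    simp only [extP]
    exact Polynomial.natDegree_linear_le
  | n + 2 => by
    simp only [extP]
    apply le_trans (Polynomial.natDegree_sub_le _ _)
    apply max_le
    · apply le_trans (Polynomial.natDegree_mul_le)
      have h1 : (Polynomial.C α * Polynomial.X + Polynomial.C β).natDegree ≤ 1 :=
        Polynomial.natDegree_linear_le
      have h2 := extP_natDegree_le α β (n + 1)
      omega
    · apply le_trans (Polynomial.natDegree_mul_le)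
      have h2 := extP_natDegree_le α β n
      simp only [Polynomial.natDegree_X]
      omega

lemma extP_coeff_succ (α β : ℂ) : ∀ n, (extP α β (n + 1)).coeff (n + 1) = α ^ (n + 1) / 2
  | 0 => by simp [extP]
  | n + 1 => by
    have h1 := extP_coeff_succ α β n
    have h2 : (extP α β (n + 1)).coeff (n + 2) = 0 :=
      Polynomial.coeff_eq_zero_of_natDegree_lt
        (lt_of_le_of_lt (extP_natDegree_le α β (n + 1)) (by omega))
    have h3 : (extP α β n).coeff (n + 1) = 0 :=
      Polynomial.coeff_eq_zero_of_natDegree_lt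
        (lt_of_le_of_lt (extP_natDegree_le α β n) (by omega))
    show (extP α β (n + 2)).coeff (n + 2) = _
    simp only [extP, Polynomial.coeff_sub, add_mul, Polynomial.coeff_add, mul_assoc,
      Polynomial.coeff_C_mul]
    rw [show n + 2 = (n + 1) + 1 from rfl, Polynomial.coeff_X_mul, Polynomial.coeff_X_mul]
    rw [h1, h3]
    rw [show (n + 1) + 1 = n + 2 from rfl, h2]
    ring

lemma chebyshev_cast (n : ℤ) (r : ℝ) :
    (((Polynomial.Chebyshev.T ℝ n).eval r : ℝ) : ℂ)
      = (Polynomial.Chebyshev.T ℂ n).eval ((r : ℝ) : ℂ) := by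
  rw [← Polynomial.Chebyshev.map_T (algebraMap ℝ ℂ), Polynomial.eval_map,
    show ((r : ℝ) : ℂ) = algebraMap ℝ ℂ r from rfl, Polynomial.eval₂_at_apply]
  rfl

lemma extP_eval (α β : ℂ) (u x : ℂ) (h : α * u ^ 2 + β = 2 * x * u) :
    ∀ n : ℕ, (extP α β n).eval (u ^ 2) =
      u ^ n * (Polynomial.Chebyshev.T ℂ (n : ℤ)).eval x
  | 0 => by simp [extP]
  | 1 => by
    simp only [extP, Polynomial.eval_add, Polynomial.eval_mul, Polynomial.eval_C,
      Polynomial.eval_X, Nat.cast_one, Polynomial.Chebyshev.T_one, pow_one]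
    linear_combination h / 2
  | n + 2 => by
    have h1 := extP_eval α β u x h (n + 1)
    have h2 := extP_eval α β u x h n
    have hc : ((n + 2 : ℕ) : ℤ) = (n : ℤ) + 2 := by push_cast; ring
    have hc1 : ((n + 1 : ℕ) : ℤ) = (n : ℤ) + 1 := by push_cast; ring
    rw [hc1] at h1
    simp only [extP, Polynomial.eval_sub, Polynomial.eval_mul, Polynomial.eval_add,
      Polynomial.eval_C, Polynomial.eval_X, h1, h2, hc,
      Polynomial.Chebyshev.T_add_two ℂ (n : ℤ)]
    simp only [Polynomial.eval_sub, Polynomial.eval_mul, Polynomial.eval_X,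
      Polynomial.eval_ofNat]
    linear_combination (u ^ (n + 1) * (Polynomial.Chebyshev.T ℂ ((n : ℤ) + 1)).eval x) * h

/-- Existence of the extremal polynomial of degree exactly `n` for the sharp Remez
inequality on the circle. -/
theorem exists_extremal_polynomial (n : ℕ) (hn : 1 ≤ n) (s : ℝ)
    (hs0 : 0 < s) (hs1 : s < 2 * Real.pi) (c₀ c₁ : ℝ) :
    ∃ P : Polynomial ℂ, P.natDegree = n ∧ ∀ z : ℝ,
      P.eval (Complex.exp (Complex.I * (z : ℂ))) =
        Complex.exp (Complex.I * (((n : ℝ) * z / 2 + c₁ : ℝ) : ℂ)) *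
          (((Polynomial.Chebyshev.T ℝ (n : ℤ)).eval
            ((1 / Real.cos (s / 4)) * Real.cos ((z - c₀) / 2)) : ℝ) : ℂ) := by
  set a : ℝ := 1 / Real.cos (s / 4) with ha
  have hcos : 0 < Real.cos (s / 4) := by
    apply Real.cos_pos_of_mem_Ioo
    constructor
    · nlinarith [Real.pi_pos]
    · nlinarith [Real.pi_pos]
  have ha0 : (a : ℂ) ≠ 0 := Complex.ofReal_ne_zero.mpr (by positivity)
  set α : ℂ := (a : ℂ) * Complex.exp (-(Complex.I * c₀ / 2)) with hα
  set β : ℂ := (a : ℂ) * Complex.exp (Complex.I * c₀ / 2) with hβ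
  have hα0 : α ≠ 0 := mul_ne_zero ha0 (Complex.exp_ne_zero _)
  refine ⟨Polynomial.C (Complex.exp (Complex.I * c₁)) * extP α β n, ?_, ?_⟩
  · rw [Polynomial.natDegree_C_mul (Complex.exp_ne_zero _)]
    apply le_antisymm (extP_natDegree_le α β n)
    obtain ⟨m, rfl⟩ := Nat.exists_eq_add_of_le hn
    apply Polynomial.le_natDegree_of_ne_zero
    rw [show 1 + m = m + 1 by ring, extP_coeff_succ]
    exact div_ne_zero (pow_ne_zero _ hα0) two_ne_zero
  · intro z
    set u : ℂ := Complex.exp (Complex.I * z / 2) with hu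
    have hu2 : u ^ 2 = Complex.exp (Complex.I * z) := by
      rw [hu, sq, ← Complex.exp_add]
      congr 1
      ring
    have hx : α * u ^ 2 + β =
        2 * ((a * Real.cos ((z - c₀) / 2) : ℝ) : ℂ) * u := by
      rw [hα, hβ, hu2, hu]
      push_cast
      have htc := Complex.two_cos ((((z : ℝ) : ℂ) - (c₀ : ℂ)) / 2)
      have e1 : Complex.exp ((((z : ℂ) - c₀) / 2) * Complex.I) *
          Complex.exp (Complex.I * z / 2) =
          Complex.exp (-(Complex.I * c₀ / 2)) * Complex.exp (Complex.I * z) := by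
        rw [← Complex.exp_add, ← Complex.exp_add]
        congr 1
        ring
      have e2 : Complex.exp (-(((z : ℂ) - c₀) / 2) * Complex.I) *
          Complex.exp (Complex.I * z / 2) = Complex.exp (Complex.I * c₀ / 2) := by
        rw [← Complex.exp_add]
        congr 1
        ring
      linear_combination (-((a : ℂ) * Complex.exp (Complex.I * z / 2))) * htc -
        (a : ℂ) * e1 - (a : ℂ) * e2
    have hev := extP_eval α β u ((a * Real.cos ((z - c₀) / 2) : ℝ) : ℂ) hx n
    rw [Polynomial.eval_mul, Polynomial.eval_C, ← hu2, hev]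
    rw [← chebyshev_cast (n : ℤ) (a * Real.cos ((z - c₀) / 2))]
    have hexp : Complex.exp (Complex.I * (((n : ℝ) * z / 2 + c₁ : ℝ) : ℂ))
        = Complex.exp (Complex.I * c₁) * u ^ n := by
      rw [hu, ← Complex.exp_nat_mul, ← Complex.exp_add]
      congr 1
      push_cast
      ring
    rw [hexp]
    ring
end

section
/- Let n ≥ 1 be an integer, 0 < s < 2π, c₀, c₁ ∈ ℝ, and let P be a polynomial with complex coefficients such that P(e^{iz}) = e^{i(nz/2 + c₁)} · 𝔗_n(sec(s/4) · cos((z − c₀)/2)) for every z ∈ ℝ. Then the set {x ∈ [0, 2π) : |P(e^{ix})| ≤ 1} has Lebesgue measure exactly 2π − s, and sup_{|ζ|=1} |P(ζ)| = |P(e^{ic₀})| = 𝔗_n(sec(s/4)). -/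
open MeasureTheory Polynomial

namespace ExtremalHelpers



lemma exists_cosh_eq {u : ℝ} (hu : 1 ≤ u) : ∃ t : ℝ, 0 ≤ t ∧ Real.cosh t = u := by
  have h1 : (0:ℝ) ≤ u^2 - 1 := by nlinarith
  set q := Real.sqrt (u^2 - 1) with hq
  have hq0 : 0 ≤ q := Real.sqrt_nonneg _
  have hq2 : q^2 = u^2 - 1 := Real.sq_sqrt h1
  have hy : 1 ≤ u + q := by linarith
  have hy0 : 0 < u + q := by linarith
  refine ⟨Real.log (u + q), Real.log_nonneg hy, ?_⟩
  rw [Real.cosh_eq, Real.exp_log hy0, Real.exp_neg, Real.exp_log hy0]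
  rw [div_eq_iff (by norm_num : (2:ℝ) ≠ 0)]
  field_simp
  nlinarith

lemma TT_cosh (n : ℤ) (t : ℝ) :
    (Chebyshev.T ℝ n).eval (Real.cosh t) = Real.cosh (n * t) := by
  have key : (((Chebyshev.T ℝ n).eval (Real.cosh t) : ℝ) : ℂ)
      = ((Real.cosh ((n:ℝ) * t) : ℝ) : ℂ) := by
    rw [Polynomial.Chebyshev.complex_ofReal_eval_T, Complex.ofReal_cosh, Complex.ofReal_cosh,
      ← Complex.cos_mul_I, Polynomial.Chebyshev.T_complex_cos, ← Complex.cos_mul_I]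
    congr 1
    push_cast
    ring
  exact_mod_cast key



lemma TT_neg_abs (n : ℤ) (x : ℝ) :
    |(Chebyshev.T ℝ n).eval (-x)| = |(Chebyshev.T ℝ n).eval x| := by
  have hcpi : Complex.cos ((n:ℂ) * (Real.pi : ℂ)) = (-1 : ℂ) ^ n := by
    have hr : Real.cos ((n : ℝ) * Real.pi) = (-1 : ℝ) ^ n := by
      simpa using Real.cos_int_mul_pi_sub 0 n
    calc Complex.cos ((n:ℂ) * (Real.pi : ℂ))
        = ((Real.cos ((n:ℝ) * Real.pi) : ℝ) : ℂ) := by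
          rw [Complex.ofReal_cos]; push_cast; ring_nf
      _ = (-1 : ℂ) ^ n := by rw [hr]; push_cast; ring
  have hspi : Complex.sin ((n:ℂ) * (Real.pi : ℂ)) = 0 := Complex.sin_int_mul_pi n
  have hC : ∀ z : ℂ, (Chebyshev.T ℂ n).eval (-z) = (-1:ℂ)^n * (Chebyshev.T ℂ n).eval z := by
    intro z
    obtain ⟨θ, rfl⟩ := Complex.cos_surjective z
    rw [← Complex.cos_pi_sub, Polynomial.Chebyshev.T_complex_cos,
      Polynomial.Chebyshev.T_complex_cos]
    have : (n:ℂ) * ((Real.pi : ℂ) - θ) = (n:ℂ) * (Real.pi:ℂ) - n * θ := by ring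
    rw [this, Complex.cos_sub, hcpi, hspi]
    ring
  have hR : (Chebyshev.T ℝ n).eval (-x) = (-1:ℝ)^n * (Chebyshev.T ℝ n).eval x := by
    have := hC (x : ℂ)
    have h1 : (((Chebyshev.T ℝ n).eval (-x) : ℝ) : ℂ)
        = (((-1:ℝ)^n * (Chebyshev.T ℝ n).eval x : ℝ) : ℂ) := by
      push_cast [Polynomial.Chebyshev.complex_ofReal_eval_T]
      simpa using this
    exact_mod_cast h1
  rw [hR, abs_mul]
  rcases Int.even_or_odd n with h | h
  · rw [h.neg_one_zpow]; simp
  · rw [h.neg_one_zpow]; simp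


lemma TT_abs_eval_abs (n : ℤ) (x : ℝ) :
    |(Chebyshev.T ℝ n).eval x| = |(Chebyshev.T ℝ n).eval (|x|)| := by
  rcases abs_cases x with ⟨h, _⟩ | ⟨h, _⟩
  · rw [h]
  · rw [h, TT_neg_abs]

lemma TT_abs_le_one (n : ℤ) {x : ℝ} (h : |x| ≤ 1) : |(Chebyshev.T ℝ n).eval x| ≤ 1 := by
  rw [abs_le] at h
  rw [← Real.cos_arccos h.1 h.2, Polynomial.Chebyshev.T_real_cos]
  exact Real.abs_cos_le_one _

lemma TT_one_le (n : ℤ) {x : ℝ} (hx : 1 ≤ x) : 1 ≤ (Chebyshev.T ℝ n).eval x := by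
  obtain ⟨t, _, rfl⟩ := exists_cosh_eq hx
  rw [TT_cosh]
  exact Real.one_le_cosh _

lemma TT_mono (n : ℤ) {u v : ℝ} (hu : 1 ≤ u) (huv : u ≤ v) :
    (Chebyshev.T ℝ n).eval u ≤ (Chebyshev.T ℝ n).eval v := by
  obtain ⟨t, ht, rfl⟩ := exists_cosh_eq hu
  obtain ⟨t', ht', rfl⟩ := exists_cosh_eq (hu.trans huv)
  rw [TT_cosh, TT_cosh]
  rw [Real.cosh_le_cosh] at huv ⊢
  calc |(n:ℝ) * t| = |(n:ℝ)| * |t| := abs_mul _ _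
    _ ≤ |(n:ℝ)| * |t'| := by gcongr
    _ = |(n:ℝ) * t'| := (abs_mul _ _).symm

lemma TT_abs_le (n : ℤ) {x A : ℝ} (hA : 1 ≤ A) (hx : |x| ≤ A) :
    |(Chebyshev.T ℝ n).eval x| ≤ (Chebyshev.T ℝ n).eval A := by
  rcases le_or_gt |x| 1 with h | h
  · exact (TT_abs_le_one n h).trans (TT_one_le n hA)
  · rw [TT_abs_eval_abs]
    rw [abs_of_nonneg (le_trans zero_le_one (TT_one_le n h.le))]
    exact TT_mono n h.le hx

lemma TT_gt_one {n : ℤ} (hn : 1 ≤ n) {x : ℝ} (hx : 1 < |x|) :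
    1 < |(Chebyshev.T ℝ n).eval x| := by
  rw [TT_abs_eval_abs]
  rw [abs_of_nonneg (le_trans zero_le_one (TT_one_le n hx.le))]
  obtain ⟨t, ht, hct⟩ := exists_cosh_eq hx.le
  calc (1:ℝ) < |x| := hx
    _ = Real.cosh t := hct.symm
    _ ≤ Real.cosh ((n:ℝ) * t) := by
        rw [Real.cosh_le_cosh, abs_mul]
        nlinarith [abs_nonneg t, le_abs_self t, abs_nonneg ((n:ℝ)),
          (by exact_mod_cast hn : (1:ℝ) ≤ (n:ℝ)), le_abs_self ((n:ℝ))]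
    _ = (Chebyshev.T ℝ n).eval (Real.cosh t) := (TT_cosh n t).symm
    _ = (Chebyshev.T ℝ n).eval (|x|) := by rw [hct]


end ExtremalHelpers

open ExtremalHelpers

/-- The extremal polynomial has its sublevel set of measure exactly `2π - s`,
and its sup over the circle is attained at `e^{i c₀}` with value `𝔗_n(sec (s/4))`. -/

theorem extremal_polynomial_properties (n : ℕ) (hn : 1 ≤ n) (s : ℝ)
    (hs0 : 0 < s) (hs1 : s < 2 * Real.pi) (c₀ c₁ : ℝ)
    (P : Polynomial ℂ)
    (hP : ∀ z : ℝ,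
      P.eval (Complex.exp (Complex.I * (z : ℂ))) =
        Complex.exp (Complex.I * (((n : ℝ) * z / 2 + c₁ : ℝ) : ℂ)) *
          (((Polynomial.Chebyshev.T ℝ (n : ℤ)).eval
            ((1 / Real.cos (s / 4)) * Real.cos ((z - c₀) / 2)) : ℝ) : ℂ)) :
    volume {x ∈ Set.Ico (0 : ℝ) (2 * Real.pi) |
        ‖P.eval (Complex.exp (Complex.I * (x : ℂ)))‖ ≤ 1}
      = ENNReal.ofReal (2 * Real.pi - s) ∧
    (⨆ ζ : {ζ : ℂ // ‖ζ‖ = 1}, ‖P.eval (ζ : ℂ)‖) =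
      ‖P.eval (Complex.exp (Complex.I * (c₀ : ℂ)))‖ ∧
    ‖P.eval (Complex.exp (Complex.I * (c₀ : ℂ)))‖ =
      (Polynomial.Chebyshev.T ℝ (n : ℤ)).eval (1 / Real.cos (s / 4)) := by
  have hpi : 0 < Real.pi := Real.pi_pos
  set c : ℝ := Real.cos (s / 4) with hc_def
  have hs4a : 0 < s / 4 := by linarith
  have hs4b : s / 4 < Real.pi / 2 := by linarith
  have hc0 : 0 < c := Real.cos_pos_of_mem_Ioo ⟨by linarith, hs4b⟩
  have hc1 : c ≤ 1 := Real.cos_le_one _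
  set a : ℝ := 1 / c with ha_def
  have ha0 : 0 < a := by positivity
  have ha1 : 1 ≤ a := by rw [ha_def, le_div_iff₀ hc0]; linarith
  have hac : a * c = 1 := one_div_mul_cancel (ne_of_gt hc0)
  -- pointwise absolute value formula
  have key : ∀ x : ℝ, ‖P.eval (Complex.exp (Complex.I * (x : ℂ)))‖
      = |(Chebyshev.T ℝ (n : ℤ)).eval (a * Real.cos ((x - c₀) / 2))| := by
    intro x
    rw [hP x, norm_mul, Complex.norm_exp, Complex.norm_real, Real.norm_eq_abs]
    have : (Complex.I * (((n : ℝ) * x / 2 + c₁ : ℝ) : ℂ)).re = 0 := by simp [Complex.mul_re]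
    rw [this, Real.exp_zero, one_mul]
  -- pointwise criterion
  have crit : ∀ x : ℝ,
      (‖P.eval (Complex.exp (Complex.I * (x : ℂ)))‖ ≤ 1
        ↔ |Real.cos ((x - c₀) / 2)| ≤ c) := by
    intro x
    rw [key x]
    constructor
    · intro h
      by_contra hlt
      push_neg at hlt
      have h1 : 1 < |a * Real.cos ((x - c₀) / 2)| := by
        rw [abs_mul, abs_of_pos ha0, ← hac]
        exact (mul_lt_mul_iff_right₀ ha0).2 hlt
      exact absurd h (not_le.2 (TT_gt_one (by exact_mod_cast hn) h1))
    · intro h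
      apply TT_abs_le_one
      rw [abs_mul, abs_of_pos ha0, ← hac]
      exact (mul_le_mul_iff_right₀ ha0).2 h
  set A : Set ℝ := {x : ℝ | |Real.cos ((x - c₀) / 2)| ≤ c} with hA_def
  have hAmeas : MeasurableSet A :=
    measurableSet_le (((Real.continuous_cos.comp (by fun_prop)).abs).measurable) measurable_const
  -- |cos θ| ≤ c iff on [0, π]
  have habs : ∀ θ : ℝ, θ ∈ Set.Icc 0 Real.pi →
      (|Real.cos θ| ≤ c ↔ s / 4 ≤ θ ∧ θ ≤ Real.pi - s / 4) := by
    intro θ hθ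
    have hm1 : s / 4 ∈ Set.Icc 0 Real.pi := ⟨hs4a.le, by linarith⟩
    have hm2 : Real.pi - s / 4 ∈ Set.Icc 0 Real.pi := ⟨by linarith, by linarith⟩
    rw [abs_le]
    constructor
    · rintro ⟨h1, h2⟩
      constructor
      · exact (Real.strictAntiOn_cos.le_iff_ge hθ hm1).1 h2
      · refine (Real.strictAntiOn_cos.le_iff_ge hm2 hθ).1 ?_
        rwa [Real.cos_pi_sub]
    · rintro ⟨h1, h2⟩
      refine ⟨?_, (Real.strictAntiOn_cos.le_iff_ge hθ hm1).2 h1⟩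
      have := (Real.strictAntiOn_cos.le_iff_ge hm2 hθ).2 h2
      rwa [Real.cos_pi_sub] at this
  -- invariance of A under translations by 2π
  have hinv : ∀ g : AddSubgroup.zmultiples (2 * Real.pi), (fun x : ℝ => g +ᵥ x) ⁻¹' A = A := by
    intro g
    obtain ⟨k, hk⟩ := AddSubgroup.mem_zmultiples_iff.1 g.2
    ext x
    have hgv : g +ᵥ x = (g : ℝ) + x := rfl
    simp only [Set.mem_preimage, hA_def, Set.mem_setOf_eq, hgv]
    have harg : ((g : ℝ) + x - c₀) / 2
        = (x - c₀) / 2 - ((-k : ℤ) : ℝ) * Real.pi := by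
      rw [← hk, zsmul_eq_mul]
      push_cast
      ring
    rw [harg, Real.cos_sub_int_mul_pi, abs_mul]
    rcases Int.even_or_odd (-k) with h | h
    · rw [h.neg_one_zpow]; simp
    · rw [h.neg_one_zpow]; simp
  -- the trace of A on (c₀, c₀ + 2π]
  have htrace : A ∩ Set.Ioc c₀ (c₀ + 2 * Real.pi)
      = Set.Icc (c₀ + s / 2) (c₀ + 2 * Real.pi - s / 2) := by
    ext x
    simp only [Set.mem_inter_iff, hA_def, Set.mem_setOf_eq, Set.mem_Ioc, Set.mem_Icc]
    constructor
    · rintro ⟨h1, h2, h3⟩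
      have hmem : (x - c₀) / 2 ∈ Set.Icc 0 Real.pi := ⟨by linarith, by linarith⟩
      obtain ⟨g1, g2⟩ := (habs _ hmem).1 h1
      constructor <;> linarith
    · rintro ⟨h1, h2⟩
      have hmem : (x - c₀) / 2 ∈ Set.Icc 0 Real.pi := ⟨by linarith, by linarith⟩
      refine ⟨(habs _ hmem).2 ⟨by linarith, by linarith⟩, by linarith, by linarith⟩
  -- measure computation
  have hmeasure : volume {x ∈ Set.Ico (0 : ℝ) (2 * Real.pi) |
      ‖P.eval (Complex.exp (Complex.I * (x : ℂ)))‖ ≤ 1}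
      = ENNReal.ofReal (2 * Real.pi - s) := by
    have hseteq : {x ∈ Set.Ico (0 : ℝ) (2 * Real.pi) |
        ‖P.eval (Complex.exp (Complex.I * (x : ℂ)))‖ ≤ 1}
        = A ∩ Set.Ico 0 (2 * Real.pi) := by
      ext x
      simp only [Set.mem_sep_iff, Set.mem_inter_iff, hA_def, Set.mem_setOf_eq, crit x]
      tauto
    rw [hseteq]
    have hae : (A ∩ Set.Ico (0:ℝ) (2 * Real.pi) : Set ℝ)
        =ᵐ[volume] (A ∩ Set.Ioc (0:ℝ) (2 * Real.pi) : Set ℝ) :=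
      Filter.EventuallyEq.inter (Filter.EventuallyEq.refl _ _) Ico_ae_eq_Ioc
    rw [measure_congr hae]
    have h2pi : (0:ℝ) < 2 * Real.pi := by linarith
    have hfd := (isAddFundamentalDomain_Ioc h2pi 0).measure_set_eq
      (isAddFundamentalDomain_Ioc h2pi c₀) hAmeas hinv
    rw [zero_add] at hfd
    rw [hfd, htrace, Real.volume_Icc]
    congr 1
    ring
  refine ⟨hmeasure, ?_, ?_⟩
  · -- sup part
    have hMval : ‖P.eval (Complex.exp (Complex.I * (c₀ : ℂ)))‖
        = (Chebyshev.T ℝ (n : ℤ)).eval a := by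
      have := key c₀
      rw [this]
      simp only [sub_self, zero_div, Real.cos_zero, mul_one]
      exact abs_of_nonneg (le_trans zero_le_one (TT_one_le _ ha1))
    have hbound : ∀ ζ : {ζ : ℂ // ‖ζ‖ = 1},
        ‖P.eval (ζ : ℂ)‖
          ≤ ‖P.eval (Complex.exp (Complex.I * (c₀ : ℂ)))‖ := by
      rintro ⟨ζ, hζ⟩
      obtain ⟨θ, hθ⟩ := (Complex.norm_eq_one_iff ζ).1 hζ
      have hcoe : ((⟨ζ, hζ⟩ : {ζ : ℂ // ‖ζ‖ = 1}) : ℂ) = ζ := rfl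
      rw [hcoe, ← hθ, show (θ:ℂ) * Complex.I = Complex.I * (θ:ℂ) from mul_comm _ _,
        key θ, hMval]
      apply TT_abs_le _ ha1
      rw [abs_mul, abs_of_pos ha0]
      calc a * |Real.cos ((θ - c₀) / 2)| ≤ a * 1 := by
            gcongr; exact Real.abs_cos_le_one _
        _ = a := mul_one a
    haveI hne : Nonempty {ζ : ℂ // ‖ζ‖ = 1} := ⟨⟨1, by simp⟩⟩
    apply le_antisymm
    · exact ciSup_le hbound
    · have hbdd : BddAbove (Set.range fun ζ : {ζ : ℂ // ‖ζ‖ = 1} =>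
          ‖P.eval (ζ : ℂ)‖) := by
        refine ⟨‖P.eval (Complex.exp (Complex.I * (c₀ : ℂ)))‖, ?_⟩
        rintro _ ⟨ζ, rfl⟩
        exact hbound ζ
      have hmem : ‖Complex.exp (Complex.I * (c₀ : ℂ))‖ = 1 := by
        rw [Complex.norm_exp]
        simp
      have := le_ciSup hbdd (⟨Complex.exp (Complex.I * (c₀ : ℂ)), hmem⟩ :
        {ζ : ℂ // ‖ζ‖ = 1})
      simpa using this
  · -- value part
    have := key c₀
    rw [this]
    simp only [sub_self, zero_div, Real.cos_zero, mul_one]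
    exact abs_of_nonneg (le_trans zero_le_one (TT_one_le _ ha1))
end

section
/- Let n ≥ 1 be an integer, 0 < s < 2π, and c₀, c₁ ∈ ℝ. Define Q(x) = e^{ic₁} · 𝔗_{2n}(sec(s/4) · cos((x − c₀)/2)) for x ∈ ℝ. Then: (1) Q is a trigonometric polynomial of degree at most n, i.e., there exist complex coefficients c_k, |k| ≤ n, with Q(x) = Σ_{k=−n}^{n} c_k e^{ikx} for all x; (2) the set {x ∈ [0, 2π) : |Q(x)| ≤ 1} has Lebesgue measure exactly 2π − s; (3) sup_{x ∈ [0, 2π)} |Q(x)| = |Q(c₀)| = 𝔗_{2n}(sec(s/4)). -/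
open MeasureTheory Polynomial

lemma chebyT_eval_neg : ∀ (m : ℕ) (y : ℝ),
    (Chebyshev.T ℝ (m : ℤ)).eval (-y) = (-1 : ℝ) ^ m * (Chebyshev.T ℝ (m : ℤ)).eval y
  | 0, y => by simp [Chebyshev.T_zero]
  | 1, y => by simp [Chebyshev.T_one]
  | (m+2), y => by
    have h1 := chebyT_eval_neg (m+1) y
    have h0 := chebyT_eval_neg m y
    have e : ((m + 2 : ℕ) : ℤ) = (m : ℤ) + 2 := by push_cast; ring
    have e1 : ((m + 1 : ℕ) : ℤ) = (m : ℤ) + 1 := by push_cast; ring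
    rw [e, Chebyshev.T_add_two]
    rw [e1] at h1
    simp only [eval_sub, eval_mul, eval_ofNat, eval_X] at *
    rw [h1, h0]
    ring

lemma chebyT_eval_cosh : ∀ (m : ℕ) (t : ℝ),
    (Chebyshev.T ℝ (m : ℤ)).eval (Real.cosh t) = Real.cosh (m * t)
  | 0, t => by simp [Chebyshev.T_zero]
  | 1, t => by simp [Chebyshev.T_one]
  | (m+2), t => by
    have h1 := chebyT_eval_cosh (m+1) t
    have h0 := chebyT_eval_cosh m t
    have e : ((m + 2 : ℕ) : ℤ) = (m : ℤ) + 2 := by push_cast; ring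
    have e1 : ((m + 1 : ℕ) : ℤ) = (m : ℤ) + 1 := by push_cast; ring
    rw [e, Chebyshev.T_add_two]
    rw [e1] at h1
    simp only [eval_sub, eval_mul, eval_ofNat, eval_X] at *
    rw [h1, h0]
    push_cast
    have ha : ((m : ℝ) + 2) * t = ((m + 1 : ℝ) * t) + t := by ring
    have hb : (m : ℝ) * t = ((m + 1 : ℝ) * t) - t := by ring
    rw [ha, hb, Real.cosh_add, Real.cosh_sub]
    ring

lemma exists_cosh_eq {y : ℝ} (hy : 1 ≤ y) : ∃ t : ℝ, 0 ≤ t ∧ Real.cosh t = y ∧ (1 < y → 0 < t) := by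
  set u : ℝ := y + Real.sqrt (y ^ 2 - 1) with hu
  have hsq : Real.sqrt (y ^ 2 - 1) ^ 2 = y ^ 2 - 1 := by
    rw [Real.sq_sqrt]; nlinarith
  have hsnn : 0 ≤ Real.sqrt (y ^ 2 - 1) := Real.sqrt_nonneg _
  have hu1 : 1 ≤ u := by nlinarith
  have hu0 : 0 < u := by linarith
  refine ⟨Real.log u, Real.log_nonneg hu1, ?_, ?_⟩
  · have hinv : Real.exp (-Real.log u) = y - Real.sqrt (y ^ 2 - 1) := by
      rw [Real.exp_neg, Real.exp_log hu0]
      exact inv_eq_of_mul_eq_one_right (by nlinarith)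
    rw [Real.cosh_eq, Real.exp_log hu0, hinv, hu]
    ring
  · intro h1
    apply Real.log_pos
    nlinarith

lemma chebyT_eval_abs_le_one (m : ℕ) {y : ℝ} (hy : |y| ≤ 1) :
    |(Chebyshev.T ℝ (m : ℤ)).eval y| ≤ 1 := by
  rw [abs_le] at hy
  rw [← Real.cos_arccos hy.1 hy.2, Chebyshev.T_real_cos]
  exact Real.abs_cos_le_one _

lemma chebyT_eval_one_le (m : ℕ) {y : ℝ} (hy : 1 ≤ y) :
    1 ≤ (Chebyshev.T ℝ (m : ℤ)).eval y := by
  obtain ⟨t, ht0, hct, htp⟩ := exists_cosh_eq hy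
  rw [← hct, chebyT_eval_cosh]
  exact Real.one_le_cosh _

lemma chebyT_eval_one_lt (m : ℕ) (hm : 1 ≤ m) {y : ℝ} (hy : 1 < y) :
    1 < (Chebyshev.T ℝ (m : ℤ)).eval y := by
  obtain ⟨t, ht0, hct, htp⟩ := exists_cosh_eq hy.le
  have htpos := htp hy
  rw [← hct, chebyT_eval_cosh, Real.one_lt_cosh]
  have : 0 < (m : ℝ) * t := by
    have : (0:ℝ) < m := by exact_mod_cast hm.trans_lt' Nat.zero_lt_one
    positivity
  exact this.ne'

lemma chebyT_eval_mono (m : ℕ) {y z : ℝ} (h1 : 1 ≤ y) (hyz : y ≤ z) :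
    (Chebyshev.T ℝ (m : ℤ)).eval y ≤ (Chebyshev.T ℝ (m : ℤ)).eval z := by
  obtain ⟨t, ht0, hct, _⟩ := exists_cosh_eq h1
  obtain ⟨u, hu0, hcu, _⟩ := exists_cosh_eq (h1.trans hyz)
  have htu : |t| ≤ |u| := by
    rw [← Real.cosh_le_cosh, hct, hcu]; exact hyz
  rw [← hct, ← hcu, chebyT_eval_cosh, chebyT_eval_cosh, Real.cosh_le_cosh, abs_mul, abs_mul]
  exact mul_le_mul_of_nonneg_left htu (abs_nonneg _)

lemma chebyT_even_eval (n : ℕ) (y : ℝ) :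
    (Chebyshev.T ℝ ((2 * n : ℕ) : ℤ)).eval (-y) = (Chebyshev.T ℝ ((2 * n : ℕ) : ℤ)).eval y := by
  rw [chebyT_eval_neg, pow_mul]
  norm_num

lemma chebyT_abs_bound (n : ℕ) {a w : ℝ} (ha : 1 ≤ a) (hw : |w| ≤ a) :
    |(Chebyshev.T ℝ ((2 * n : ℕ) : ℤ)).eval w| ≤ (Chebyshev.T ℝ ((2 * n : ℕ) : ℤ)).eval a := by
  have hww : (Chebyshev.T ℝ ((2 * n : ℕ) : ℤ)).eval w
      = (Chebyshev.T ℝ ((2 * n : ℕ) : ℤ)).eval |w| := by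
    rcases abs_choice w with h | h
    · rw [h]
    · rw [← chebyT_even_eval, ← h]
  rcases le_or_gt (|w|) 1 with h | h
  · exact (chebyT_eval_abs_le_one _ h).trans (chebyT_eval_one_le _ ha)
  · have h1 : 1 ≤ (Chebyshev.T ℝ ((2 * n : ℕ) : ℤ)).eval |w| := chebyT_eval_one_le _ h.le
    rw [hww, abs_of_nonneg (by linarith)]
    exact chebyT_eval_mono _ h.le hw

lemma sum_shift (N : ℕ) (c : ℤ → ℂ) (hc : ∀ k : ℤ, c k ≠ 0 → |k| < (N : ℤ))
    (g : ℤ → ℂ) {j : ℤ} (hj : |j| ≤ 1) :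
    ∑ k ∈ Finset.Icc (-(N : ℤ)) (N : ℤ), c k * g (k + j)
      = ∑ k ∈ Finset.Icc (-(N : ℤ)) (N : ℤ), c (k - j) * g k := by
  obtain ⟨hj1, hj2⟩ := abs_le.mp hj
  set F : ℤ → ℂ := fun t => c (t - j) * g t with hF
  have hsupp : ∀ t : ℤ, F t ≠ 0 → -(N : ℤ) < t - j ∧ t - j < N := by
    intro t ht
    have hcz : c (t - j) ≠ 0 := left_ne_zero_of_mul ht
    have := abs_lt.mp (hc _ hcz)
    exact this
  have h1 : ∑ k ∈ Finset.Icc (-(N : ℤ)) (N : ℤ), c k * g (k + j)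
      = ∑ t ∈ Finset.Icc (-(N : ℤ) + j) ((N : ℤ) + j), F t := by
    rw [← Finset.map_add_right_Icc, Finset.sum_map]
    refine Finset.sum_congr rfl fun k _ => ?_
    simp [hF, addRightEmbedding]
  have e1 : ∑ t ∈ Finset.Icc (-(N : ℤ) + j) ((N : ℤ) + j), F t
      = ∑ t ∈ Finset.Icc (-(N : ℤ) - 1) ((N : ℤ) + 1), F t := by
    refine Finset.sum_subset (Finset.Icc_subset_Icc (by linarith) (by linarith)) ?_
    intro t ht hts
    by_contra hne
    obtain ⟨l, r⟩ := hsupp t hne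
    exact hts (Finset.mem_Icc.mpr ⟨by linarith, by linarith⟩)
  have e2 : ∑ t ∈ Finset.Icc (-(N : ℤ)) (N : ℤ), F t
      = ∑ t ∈ Finset.Icc (-(N : ℤ) - 1) ((N : ℤ) + 1), F t := by
    refine Finset.sum_subset (Finset.Icc_subset_Icc (by linarith) (by linarith)) ?_
    intro t ht hts
    by_contra hne
    obtain ⟨l, r⟩ := hsupp t hne
    obtain ⟨bl, br⟩ := Finset.mem_Icc.mp ht
    rcases (Finset.mem_Icc.not.mp hts) with h
    · omega
  rw [h1, e1, ← e2]

/-- Auxiliary exponential `e^{i k (x-b)/2}`. -/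
noncomputable def cE (b : ℝ) (k : ℤ) (x : ℝ) : ℂ :=
  Complex.exp ((k : ℂ) * ((x : ℂ) - (b : ℂ)) * Complex.I / 2)

lemma cE_mul (b : ℝ) (k j : ℤ) (x : ℝ) : cE b k x * cE b j x = cE b (k + j) x := by
  rw [cE, cE, cE, ← Complex.exp_add]
  congr 1
  push_cast
  ring

lemma cos_half_expand (b x : ℝ) :
    Complex.cos (((x : ℂ) - (b : ℂ)) / 2) = (cE b 1 x + cE b (-1) x) / 2 := by
  rw [Complex.cos]
  congr 2
  · congr 1; push_cast; ring
  · congr 1; push_cast; ring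

lemma sum_single (N : ℕ) (j : ℤ) (hj : j ∈ Finset.Icc (-(N : ℤ)) (N : ℤ)) (v : ℂ) (f : ℤ → ℂ) :
    ∑ k ∈ Finset.Icc (-(N : ℤ)) (N : ℤ), (if k = j then v else 0) * f k = v * f j := by
  rw [Finset.sum_eq_single_of_mem j hj (fun k _ hk => by simp [hk])]
  simp

lemma trig_aux (a b : ℝ) (N : ℕ) : ∀ m : ℕ, m ≤ N →
    ∃ c : ℤ → ℂ,
      (∀ k : ℤ, c k ≠ 0 → (-(m : ℤ)) ≤ k ∧ k ≤ (m : ℤ) ∧ (2 : ℤ) ∣ (k + (m : ℤ))) ∧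
      ∀ x : ℝ, (((Chebyshev.T ℝ (m : ℤ)).eval (a * Real.cos ((x - b) / 2)) : ℝ) : ℂ)
        = ∑ k ∈ Finset.Icc (-(N : ℤ)) (N : ℤ), c k * cE b k x
  | 0, hm => by
    refine ⟨fun k => if k = 0 then 1 else 0, ?_, ?_⟩
    · intro k hk
      by_cases h : k = 0
      · subst h; refine ⟨by simp, by simp, by simp⟩
      · simp [h] at hk
    · intro x
      rw [sum_single N 0 (by simp) 1 (fun k => cE b k x)]
      norm_num [cE, Chebyshev.T_zero]
  | 1, hm => by
    refine ⟨fun k => (if k = 1 then ((a : ℂ)/2) else 0) + (if k = -1 then ((a : ℂ)/2) else 0),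
      ?_, ?_⟩
    · intro k hk
      by_cases h1 : k = 1
      · subst h1; exact ⟨by omega, by omega, by omega⟩
      · by_cases h2 : k = -1
        · subst h2; exact ⟨by omega, by omega, by omega⟩
        · simp [h1, h2] at hk
    · intro x
      have hN : (1 : ℤ) ≤ (N : ℤ) := by exact_mod_cast hm
      simp only [add_mul, Finset.sum_add_distrib]
      rw [sum_single N 1 (by simp; omega) ((a : ℂ)/2) (fun k => cE b k x),
        sum_single N (-1) (by simp; omega) ((a : ℂ)/2) (fun k => cE b k x)]
      rw [show ((1 : ℕ) : ℤ) = 1 from rfl, Chebyshev.T_one, eval_X]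
      push_cast
      rw [cos_half_expand]
      ring
  | (m+2), hm => by
    obtain ⟨c1, hc1s, hc1⟩ := trig_aux a b N (m+1) (by omega)
    obtain ⟨c0, hc0s, hc0⟩ := trig_aux a b N m (by omega)
    refine ⟨fun k => (a : ℂ) * c1 (k - 1) + (a : ℂ) * c1 (k + 1) - c0 k, ?_, ?_⟩
    · intro k hk
      have hor : c1 (k - 1) ≠ 0 ∨ c1 (k + 1) ≠ 0 ∨ c0 k ≠ 0 := by
        by_contra h
        push_neg at h
        simp [h.1, h.2.1, h.2.2] at hk
      rcases hor with h | h | h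
      · obtain ⟨h1, h2, h3⟩ := hc1s _ h; refine ⟨by omega, by omega, by omega⟩
      · obtain ⟨h1, h2, h3⟩ := hc1s _ h; refine ⟨by omega, by omega, by omega⟩
      · obtain ⟨h1, h2, h3⟩ := hc0s _ h; refine ⟨by omega, by omega, by omega⟩
    · intro x
      set y : ℝ := a * Real.cos ((x - b) / 2) with hy
      have hrecR : (Chebyshev.T ℝ ((m + 2 : ℕ) : ℤ)).eval y
          = 2 * y * (Chebyshev.T ℝ ((m + 1 : ℕ) : ℤ)).eval y
            - (Chebyshev.T ℝ (m : ℤ)).eval y := by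
        rw [show ((m + 2 : ℕ) : ℤ) = (m : ℤ) + 2 by push_cast; ring, Chebyshev.T_add_two]
        rw [show ((m + 1 : ℕ) : ℤ) = (m : ℤ) + 1 by push_cast; ring]
        simp [eval_sub, eval_mul, eval_ofNat]
      rw [hrecR, Complex.ofReal_sub, Complex.ofReal_mul, Complex.ofReal_mul,
        Complex.ofReal_ofNat, hc1 x, hc0 x]
      have hyc : ((y : ℝ) : ℂ) = (a : ℂ)/2 * (cE b 1 x + cE b (-1) x) := by
        rw [hy]
        push_cast
        rw [cos_half_expand]
        ring
      rw [hyc]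
      have hsupp1 : ∀ k : ℤ, ((a : ℂ) * c1 k) ≠ 0 → |k| < (N : ℤ) := by
        intro k hk
        obtain ⟨h1, h2, _⟩ := hc1s k (right_ne_zero_of_mul hk)
        rw [abs_lt]
        omega
      have expand : 2 * ((a : ℂ)/2 * (cE b 1 x + cE b (-1) x))
            * (∑ k ∈ Finset.Icc (-(N : ℤ)) (N : ℤ), c1 k * cE b k x)
          = (∑ k ∈ Finset.Icc (-(N : ℤ)) (N : ℤ), ((a : ℂ) * c1 k) * cE b (k + 1) x)
            + (∑ k ∈ Finset.Icc (-(N : ℤ)) (N : ℤ), ((a : ℂ) * c1 k) * cE b (k + -1) x) := by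
        rw [Finset.mul_sum, ← Finset.sum_add_distrib]
        refine Finset.sum_congr rfl fun k _ => ?_
        rw [← cE_mul b k 1 x, ← cE_mul b k (-1) x]
        ring
      rw [expand]
      rw [sum_shift N (fun k => (a : ℂ) * c1 k) hsupp1 (fun k => cE b k x) (by norm_num),
        sum_shift N (fun k => (a : ℂ) * c1 k) hsupp1 (fun k => cE b k x)
          (j := -1) (by norm_num)]
      rw [← Finset.sum_add_distrib, ← Finset.sum_sub_distrib]
      refine Finset.sum_congr rfl fun k _ => ?_
      rw [show k - (-1) = k + 1 by ring]
      ring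

lemma sum_even_support (n : ℕ) (F : ℤ → ℂ) (hF : ∀ k : ℤ, F k ≠ 0 → (2 : ℤ) ∣ k) :
    ∑ k ∈ Finset.Icc (-((2 * n : ℕ) : ℤ)) ((2 * n : ℕ) : ℤ), F k
      = ∑ j ∈ Finset.Icc (-(n : ℤ)) (n : ℤ), F (2 * j) := by
  have hsub : (Finset.Icc (-(n : ℤ)) (n : ℤ)).image (fun j => 2 * j)
      ⊆ Finset.Icc (-((2 * n : ℕ) : ℤ)) ((2 * n : ℕ) : ℤ) := by
    intro k hk
    simp only [Finset.mem_image, Finset.mem_Icc] at hk ⊢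
    obtain ⟨j, ⟨h1, h2⟩, rfl⟩ := hk
    omega
  rw [← Finset.sum_subset hsub ?van, Finset.sum_image ?inj]
  case inj => intro p _ q _ h; have h' : 2 * p = 2 * q := h; omega
  case van =>
    intro k hk hks
    by_contra hne
    obtain ⟨j, rfl⟩ := hF k hne
    simp only [Finset.mem_Icc] at hk
    refine hks ?_
    simp only [Finset.mem_image, Finset.mem_Icc]
    exact ⟨j, by omega, rfl⟩

lemma abs_cos_le_iff {γ u : ℝ} (hγ0 : 0 < γ) (hγ : γ < Real.pi / 2)
    (hu1 : -γ < u) (hu2 : u ≤ Real.pi - γ) :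
    |Real.cos u| ≤ Real.cos γ ↔ γ ≤ u := by
  have hπ := Real.pi_pos
  constructor
  · intro h
    by_contra hlt
    push_neg at hlt
    have habs : |u| < γ := abs_lt.mpr ⟨by linarith, hlt⟩
    have : Real.cos γ < Real.cos |u| :=
      Real.cos_lt_cos_of_nonneg_of_le_pi (abs_nonneg u) (by linarith) habs
    rw [Real.cos_abs] at this
    have hle : Real.cos u ≤ |Real.cos u| := le_abs_self _
    linarith
  · intro h
    rw [abs_le]
    constructor
    · have : Real.cos (Real.pi - γ) ≤ Real.cos u :=
        Real.cos_le_cos_of_nonneg_of_le_pi (by linarith) (by linarith) hu2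
      rw [Real.cos_pi_sub] at this
      linarith
    · exact Real.cos_le_cos_of_nonneg_of_le_pi (by linarith) (by linarith) h

lemma chebyT_abs_le_one_iff (n : ℕ) (hn : 1 ≤ n) (w : ℝ) :
    |(Chebyshev.T ℝ ((2 * n : ℕ) : ℤ)).eval w| ≤ 1 ↔ |w| ≤ 1 := by
  refine ⟨fun h => ?_, chebyT_eval_abs_le_one _⟩
  by_contra hw
  push_neg at hw
  have hww : (Chebyshev.T ℝ ((2 * n : ℕ) : ℤ)).eval w
      = (Chebyshev.T ℝ ((2 * n : ℕ) : ℤ)).eval |w| := by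
    rcases abs_choice w with h' | h'
    · rw [h']
    · rw [← chebyT_even_eval, ← h']
  have hlt : 1 < (Chebyshev.T ℝ ((2 * n : ℕ) : ℤ)).eval |w| :=
    chebyT_eval_one_lt (2 * n) (by omega) hw
  have : (Chebyshev.T ℝ ((2 * n : ℕ) : ℤ)).eval |w| ≤ |(Chebyshev.T ℝ ((2 * n : ℕ) : ℤ)).eval w| := by
    rw [hww]; exact le_abs_self _
  linarith

/-- Properties of the extremal trigonometric polynomial
`Q x = e^{i c₁} 𝔗_{2n}(sec(s/4) cos((x - c₀)/2))`. -/
theorem extremal_trig_polynomial_properties (n : ℕ) (hn : 1 ≤ n) (s : ℝ)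
    (hs0 : 0 < s) (hs1 : s < 2 * Real.pi) (c₀ c₁ : ℝ)
    (Q : ℝ → ℂ)
    (hQ : ∀ x : ℝ, Q x = Complex.exp (Complex.I * (c₁ : ℂ)) *
      (((Polynomial.Chebyshev.T ℝ (2 * n : ℤ)).eval
        ((1 / Real.cos (s / 4)) * Real.cos ((x - c₀) / 2)) : ℝ) : ℂ)) :
    (∃ c : ℤ → ℂ, ∀ x : ℝ, Q x = ∑ k ∈ Finset.Icc (-(n : ℤ)) (n : ℤ),
      c k * Complex.exp ((k : ℂ) * (x : ℂ) * Complex.I)) ∧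
    volume {x ∈ Set.Ico (0 : ℝ) (2 * Real.pi) | ‖Q x‖ ≤ 1}
      = ENNReal.ofReal (2 * Real.pi - s) ∧
    (⨆ x : Set.Ico (0 : ℝ) (2 * Real.pi), ‖Q x‖) = ‖Q c₀‖ ∧
    ‖Q c₀‖ = (Polynomial.Chebyshev.T ℝ (2 * n : ℤ)).eval (1 / Real.cos (s / 4)) := by
  have hπ := Real.pi_pos
  have hidx : (2 * (n : ℤ)) = ((2 * n : ℕ) : ℤ) := by push_cast; ring
  rw [hidx] at hQ ⊢
  set a : ℝ := 1 / Real.cos (s / 4) with ha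
  have hγ0 : 0 < s / 4 := by linarith
  have hγlt : s / 4 < Real.pi / 2 := by linarith
  have hcpos : 0 < Real.cos (s / 4) := Real.cos_pos_of_mem_Ioo ⟨by linarith, hγlt⟩
  have hclt1 : Real.cos (s / 4) < 1 := by
    have h := Real.cos_lt_cos_of_nonneg_of_le_pi (le_refl (0 : ℝ)) (by linarith) hγ0
    simpa using h
  have ha1 : 1 < a := by rw [ha, lt_div_iff₀ hcpos, one_mul]; exact hclt1
  have ha0 : 0 < a := by linarith
  have habsQ : ∀ x : ℝ, ‖Q x‖
      = |(Chebyshev.T ℝ ((2 * n : ℕ) : ℤ)).eval (a * Real.cos ((x - c₀) / 2))| := by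
    intro x
    rw [hQ x, norm_mul, Complex.norm_exp, Complex.norm_real]
    simp [Complex.mul_re]
  -- Part 4
  have hM1 : 1 < (Chebyshev.T ℝ ((2 * n : ℕ) : ℤ)).eval a :=
    chebyT_eval_one_lt (2 * n) (by omega) ha1
  have h4 : ‖Q c₀‖ = (Chebyshev.T ℝ ((2 * n : ℕ) : ℤ)).eval a := by
    rw [habsQ c₀, show (c₀ - c₀) / 2 = 0 by ring, Real.cos_zero, mul_one,
      abs_of_pos (by linarith)]
  -- uniform bound
  have hbound : ∀ x : ℝ, ‖Q x‖ ≤ (Chebyshev.T ℝ ((2 * n : ℕ) : ℤ)).eval a := by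
    intro x
    rw [habsQ x]
    refine chebyT_abs_bound n ha1.le ?_
    rw [abs_mul, abs_of_pos ha0]
    calc a * |Real.cos ((x - c₀) / 2)| ≤ a * 1 :=
          mul_le_mul_of_nonneg_left (Real.abs_cos_le_one _) ha0.le
      _ = a := mul_one a
  -- attaining point
  set x₀ : ℝ := c₀ - ⌊c₀ / (2 * Real.pi)⌋ * (2 * Real.pi) with hx₀
  have hmem : x₀ ∈ Set.Ico (0 : ℝ) (2 * Real.pi) :=
    ⟨Int.sub_floor_div_mul_nonneg c₀ (by positivity),
     Int.sub_floor_div_mul_lt c₀ (by positivity)⟩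
  have hvabs : |Real.cos ((x₀ - c₀) / 2)| = 1 := by
    have harg : (x₀ - c₀) / 2 = -((⌊c₀ / (2 * Real.pi)⌋ : ℝ) * Real.pi) := by
      rw [hx₀]; ring
    rw [harg, Real.cos_neg, Real.abs_cos_int_mul_pi]
  have habs_x₀ : ‖Q x₀‖ = (Chebyshev.T ℝ ((2 * n : ℕ) : ℤ)).eval a := by
    rw [habsQ x₀]
    rcases (abs_eq (by norm_num : (0:ℝ) ≤ 1)).mp hvabs with h | h
    · rw [h, mul_one, abs_of_pos (by linarith)]
    · rw [h, show a * (-1 : ℝ) = -a by ring, chebyT_even_eval, abs_of_pos (by linarith)]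
  haveI hne : Nonempty (Set.Ico (0 : ℝ) (2 * Real.pi)) := ⟨⟨x₀, hmem⟩⟩
  have hsup : (⨆ x : Set.Ico (0 : ℝ) (2 * Real.pi), ‖Q x‖) = ‖Q c₀‖ := by
    rw [h4]
    apply le_antisymm
    · exact ciSup_le fun x => hbound x
    · have hb : BddAbove (Set.range fun x : Set.Ico (0 : ℝ) (2 * Real.pi) => ‖Q x‖) :=
        ⟨(Chebyshev.T ℝ ((2 * n : ℕ) : ℤ)).eval a, by rintro v ⟨x, rfl⟩; exact hbound x⟩
      have hle := le_ciSup hb (⟨x₀, hmem⟩ : Set.Ico (0 : ℝ) (2 * Real.pi))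
      rwa [habs_x₀] at hle
  refine ⟨?_, ?_, hsup, h4⟩
  · -- Part 1 : trig polynomial
    obtain ⟨c, hcs, hcrep⟩ := trig_aux a c₀ (2 * n) (2 * n) le_rfl
    refine ⟨fun j => Complex.exp (Complex.I * (c₁ : ℂ)) *
      (c (2 * j) * Complex.exp (-(j : ℂ) * (c₀ : ℂ) * Complex.I)), fun x => ?_⟩
    rw [hQ x, hcrep x]
    rw [sum_even_support n (fun k => c k * cE c₀ k x) (fun k hk => by
      obtain ⟨_, _, hdvd⟩ := hcs k (left_ne_zero_of_mul hk)
      omega)]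
    rw [Finset.mul_sum]
    refine Finset.sum_congr rfl fun j _ => ?_
    have hexp : cE c₀ (2 * j) x
        = Complex.exp (-(j : ℂ) * (c₀ : ℂ) * Complex.I) * Complex.exp ((j : ℂ) * (x : ℂ) * Complex.I) := by
      rw [cE, ← Complex.exp_add]
      congr 1
      push_cast
      ring
    rw [hexp]
    ring
  · -- Part 2 : measure
    set A : Set ℝ := {x : ℝ | |Real.cos ((x - c₀) / 2)| ≤ Real.cos (s / 4)} with hA
    have hsetEq : {x ∈ Set.Ico (0 : ℝ) (2 * Real.pi) | ‖Q x‖ ≤ 1}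
        = A ∩ Set.Ico (0 : ℝ) (2 * Real.pi) := by
      ext x
      simp only [Set.mem_setOf_eq, Set.mem_inter_iff, hA, Set.mem_sep_iff]
      rw [and_comm]
      apply and_congr_left
      intro _
      rw [habsQ x, chebyT_abs_le_one_iff n hn, abs_mul, abs_of_pos ha0, ha,
        div_mul_eq_mul_div, one_mul, div_le_one hcpos]
    have hmeasA : MeasurableSet A := by
      have hcont : Continuous fun x : ℝ => |Real.cos ((x - c₀) / 2)| :=
        (Real.continuous_cos.comp (by continuity)).abs
      exact measurableSet_le hcont.measurable measurable_const
    have hinv : ∀ g : AddSubgroup.zmultiples (2 * Real.pi),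
        (fun x : ℝ => g +ᵥ x) ⁻¹' A = A := by
      rintro ⟨g, hg⟩
      obtain ⟨k, rfl⟩ := AddSubgroup.mem_zmultiples_iff.mp hg
      ext x
      simp only [Set.mem_preimage, hA, Set.mem_setOf_eq]
      have hvadd : ((⟨k • (2 * Real.pi), hg⟩ : AddSubgroup.zmultiples (2 * Real.pi))
          +ᵥ x) = k • (2 * Real.pi) + x := rfl
      rw [hvadd]
      have harg : (k • (2 * Real.pi) + x - c₀) / 2 = (x - c₀) / 2 + (k : ℝ) * Real.pi := by
        rw [zsmul_eq_mul]; ring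
      rw [harg]
      have hcosk : Real.cos ((k : ℝ) * Real.pi) = (-1 : ℝ) ^ k := by
        have := Real.cos_int_mul_pi_sub 0 k
        simpa using this
      rw [Real.cos_add, Real.sin_int_mul_pi, hcosk, mul_zero, sub_zero]
      rcases Int.even_or_odd k with hk | hk
      · rw [hk.neg_one_zpow, mul_one]
      · rw [hk.neg_one_zpow, mul_neg_one, abs_neg]
    have hfd0 := isAddFundamentalDomain_Ioc (by positivity : (0 : ℝ) < 2 * Real.pi) 0
    have hfdt := isAddFundamentalDomain_Ioc (by positivity : (0 : ℝ) < 2 * Real.pi) (c₀ - s / 2)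
    have hkey := hfd0.measure_set_eq hfdt hmeasA hinv
    have hico_ioc : volume (A ∩ Set.Ico (0 : ℝ) (2 * Real.pi))
        = volume (A ∩ Set.Ioc (0 : ℝ) (2 * Real.pi)) := by
      apply le_antisymm
      · have hsub : A ∩ Set.Ico (0 : ℝ) (2 * Real.pi)
            ⊆ (A ∩ Set.Ioc (0 : ℝ) (2 * Real.pi)) ∪ {0} := by
          rintro x ⟨hxA, h0, h2⟩
          rcases eq_or_lt_of_le h0 with h | h
          · right; simp [← h]
          · left; exact ⟨hxA, h, h2.le⟩
        calc volume (A ∩ Set.Ico (0 : ℝ) (2 * Real.pi))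
            ≤ volume ((A ∩ Set.Ioc (0 : ℝ) (2 * Real.pi)) ∪ {0}) := measure_mono hsub
          _ ≤ volume (A ∩ Set.Ioc (0 : ℝ) (2 * Real.pi)) + volume ({0} : Set ℝ) :=
              measure_union_le _ _
          _ = volume (A ∩ Set.Ioc (0 : ℝ) (2 * Real.pi)) := by simp
      · have hsub : A ∩ Set.Ioc (0 : ℝ) (2 * Real.pi)
            ⊆ (A ∩ Set.Ico (0 : ℝ) (2 * Real.pi)) ∪ {2 * Real.pi} := by
          rintro x ⟨hxA, h0, h2⟩
          rcases eq_or_lt_of_le h2 with h | h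
          · right; simp [h]
          · left; exact ⟨hxA, h0.le, h⟩
        calc volume (A ∩ Set.Ioc (0 : ℝ) (2 * Real.pi))
            ≤ volume ((A ∩ Set.Ico (0 : ℝ) (2 * Real.pi)) ∪ {2 * Real.pi}) := measure_mono hsub
          _ ≤ volume (A ∩ Set.Ico (0 : ℝ) (2 * Real.pi)) + volume ({2 * Real.pi} : Set ℝ) :=
              measure_union_le _ _
          _ = volume (A ∩ Set.Ico (0 : ℝ) (2 * Real.pi)) := by simp
    have hAIoc : A ∩ Set.Ioc (c₀ - s / 2) (c₀ - s / 2 + 2 * Real.pi)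
        = Set.Icc (c₀ + s / 2) (c₀ + 2 * Real.pi - s / 2) := by
      ext x
      simp only [Set.mem_inter_iff, hA, Set.mem_setOf_eq, Set.mem_Ioc, Set.mem_Icc]
      constructor
      · rintro ⟨hxA, h1, h2⟩
        have hiff := abs_cos_le_iff hγ0 hγlt (u := (x - c₀) / 2) (by linarith) (by linarith)
        have := hiff.mp hxA
        constructor <;> linarith
      · rintro ⟨h1, h2⟩
        have hiff := abs_cos_le_iff hγ0 hγlt (u := (x - c₀) / 2) (by linarith) (by linarith)
        exact ⟨hiff.mpr (by linarith), by linarith, by linarith⟩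
    rw [hsetEq, hico_ioc, show Set.Ioc (0 : ℝ) (2 * Real.pi) = Set.Ioc (0 : ℝ) (0 + 2 * Real.pi)
      by rw [zero_add], hkey, hAIoc, Real.volume_Icc]
    congr 1
    ring
end

section
/- Let n ≥ 1 be an integer, let E be a nonempty closed subset of the unit circle {ζ ∈ ℂ : |ζ| = 1}, and let c ∈ ℝ with e^{ic} ∉ E. Let T be a polynomial of degree at most n with complex coefficients such that |T(ζ)| ≤ 1 for all ζ ∈ E, and suppose T is extremal at e^{ic}: for every polynomial P of degree at most n with |P(ζ)| ≤ 1 for all ζ ∈ E, one has |P(e^{ic})| ≤ |T(e^{ic})|. Then there is no w ∈ ℂ with 0 < |w| < 1 such that T(w) = 0 and T(1/\bar{w}) = 0. -/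
open MeasureTheory Polynomial

lemma unit_mul_conj (ζ : ℂ) (hζ : ‖ζ‖ = 1) : ζ * (starRingEnd ℂ) ζ = 1 := by
  rw [Complex.mul_conj]; norm_cast; rw [← Complex.sq_norm, hζ]; norm_num

set_option maxHeartbeats 1000000 in
lemma master_identity (w z0 ζ : ℂ) (s : ℝ)
    (hζ : ‖ζ‖ = 1) (hz0 : ‖z0‖ = 1) :
    Complex.normSq (ζ - w) * Complex.normSq (z0 - (w + (-(s:ℂ)) * (starRingEnd ℂ) z0 * (z0 - w)^2))
      - Complex.normSq (z0 - w) * Complex.normSq (ζ - (w + (-(s:ℂ)) * (starRingEnd ℂ) z0 * (z0 - w)^2))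
    = s * Complex.normSq (z0 - w) * Complex.normSq (ζ - z0) * (1 - Complex.normSq w)
      + s^2 * (Complex.normSq (z0 - w))^2 * (Complex.normSq (ζ - w) - Complex.normSq (z0 - w)) := by
  have hζζ : ζ * (starRingEnd ℂ) ζ = 1 := unit_mul_conj ζ hζ
  have hz0z0 : z0 * (starRingEnd ℂ) z0 = 1 := unit_mul_conj z0 hz0
  have cast_eq : ∀ x y : ℝ, (x:ℂ) = (y:ℂ) → x = y := fun x y h => by exact_mod_cast h
  apply cast_eq
  push_cast
  simp only [← Complex.mul_conj]
  simp only [map_sub, map_add, map_mul, map_pow, map_neg, map_one, Complex.conj_conj,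
    Complex.conj_ofReal]
  linear_combination ((-1:ℂ) * w * ((starRingEnd ℂ) w) * (s:ℂ) + w^2 * ((starRingEnd ℂ) w)^2 * (s:ℂ) + (-1:ℂ) * w^2 * ((starRingEnd ℂ) w)^2 * (s:ℂ)^2 + ((starRingEnd ℂ) z0) * w * (s:ℂ) + (-2:ℂ) * ((starRingEnd ℂ) z0) * w^2 * ((starRingEnd ℂ) w) * (s:ℂ) + (2:ℂ) * ((starRingEnd ℂ) z0) * w^2 * ((starRingEnd ℂ) w) * (s:ℂ)^2 + ((starRingEnd ℂ) z0)^2 * w^2 * (s:ℂ) + (-1:ℂ) * ((starRingEnd ℂ) z0)^2 * w^2 * (s:ℂ)^2 + z0 * ((starRingEnd ℂ) w) * (s:ℂ) + (-2:ℂ) * z0 * w * ((starRingEnd ℂ) w)^2 * (s:ℂ) + (2:ℂ) * z0 * w * ((starRingEnd ℂ) w)^2 * (s:ℂ)^2 + (-1:ℂ) * z0 * ((starRingEnd ℂ) z0) * (s:ℂ) + (5:ℂ) * z0 * ((starRingEnd ℂ) z0) * w * ((starRingEnd ℂ) w) * (s:ℂ) + (-4:ℂ) * z0 * ((starRingEnd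 ℂ) z0) * w * ((starRingEnd ℂ) w) * (s:ℂ)^2 + z0 * ((starRingEnd ℂ) z0) * w^2 * ((starRingEnd ℂ) w)^2 * (s:ℂ)^2 + (-3:ℂ) * z0 * ((starRingEnd ℂ) z0)^2 * w * (s:ℂ) + (2:ℂ) * z0 * ((starRingEnd ℂ) z0)^2 * w * (s:ℂ)^2 + (-2:ℂ) * z0 * ((starRingEnd ℂ) z0)^2 * w^2 * ((starRingEnd ℂ) w) * (s:ℂ)^2 + z0 * ((starRingEnd ℂ) z0)^3 * w^2 * (s:ℂ)^2 + z0^2 * ((starRingEnd ℂ) w)^2 * (s:ℂ) + (-1:ℂ) * z0^2 * ((starRingEnd ℂ) w)^2 * (s:ℂ)^2 + (-3:ℂ) * z0^2 * ((starRingEnd ℂ) z0) * ((starRingEnd ℂ) w) * (s:ℂ) + (2:ℂ) * z0^2 * ((starRingEnd ℂ) z0) * ((starRingEnd ℂ) w) * (s:ℂ)^2 + (-2:ℂ) * z0^2 * ((starRingEnd ℂ) z0) * w * ((starRingEnd ℂ) w)^2 * (s:ℂ)^2 + (2:ℂ) * z0^2 * ((starRingEnd ℂ) z0)^2 * (s:ℂ)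 + (-1:ℂ) * z0^2 * ((starRingEnd ℂ) z0)^2 * (s:ℂ)^2 + (4:ℂ) * z0^2 * ((starRingEnd ℂ) z0)^2 * w * ((starRingEnd ℂ) w) * (s:ℂ)^2 + (-2:ℂ) * z0^2 * ((starRingEnd ℂ) z0)^3 * w * (s:ℂ)^2 + z0^3 * ((starRingEnd ℂ) z0) * ((starRingEnd ℂ) w)^2 * (s:ℂ)^2 + (-2:ℂ) * z0^3 * ((starRingEnd ℂ) z0)^2 * ((starRingEnd ℂ) w) * (s:ℂ)^2 + z0^3 * ((starRingEnd ℂ) z0)^3 * (s:ℂ)^2) * hζζ + (w * ((starRingEnd ℂ) w) * (s:ℂ) + (-1:ℂ) * w^2 * ((starRingEnd ℂ) w)^2 * (s:ℂ) + w^2 * ((starRingEnd ℂ) w)^2 * (s:ℂ)^2 + (-1:ℂ) * ((starRingEnd ℂ) z0) * w * (s:ℂ) + (2:ℂ) * ((starRingEnd ℂ) z0) * w^2 * ((starRingEnd ℂ) w) * (s:ℂ) + (-2:ℂ) * ((starRingEnd ℂ) z0) * w^2 * ((starRingEnd ℂ) w) * (s:ℂ)^2 + ((starRingEnd ℂ)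 z0) * w^3 * ((starRingEnd ℂ) w)^2 * (s:ℂ)^2 + (-1:ℂ) * ((starRingEnd ℂ) z0)^2 * w^2 * (s:ℂ) + ((starRingEnd ℂ) z0)^2 * w^2 * (s:ℂ)^2 + (-2:ℂ) * ((starRingEnd ℂ) z0)^2 * w^3 * ((starRingEnd ℂ) w) * (s:ℂ)^2 + ((starRingEnd ℂ) z0)^3 * w^3 * (s:ℂ)^2 + (-1:ℂ) * z0 * ((starRingEnd ℂ) w) * (s:ℂ) + (2:ℂ) * z0 * w * ((starRingEnd ℂ) w)^2 * (s:ℂ) + (-2:ℂ) * z0 * w * ((starRingEnd ℂ) w)^2 * (s:ℂ)^2 + z0 * w^2 * ((starRingEnd ℂ) w)^3 * (s:ℂ)^2 + z0 * ((starRingEnd ℂ) z0) * (s:ℂ) + (-3:ℂ) * z0 * ((starRingEnd ℂ) z0) * w * ((starRingEnd ℂ) w) * (s:ℂ) + (4:ℂ) * z0 * ((starRingEnd ℂ) z0) * w * ((starRingEnd ℂ) w) * (s:ℂ)^2 + (-5:ℂ) * z0 * ((starRingEnd ℂ) z0) * w^2 * ((starRingEnd ℂ) w)^2 * (s:ℂ)^2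 + z0 * ((starRingEnd ℂ) z0)^2 * w * (s:ℂ) + (-2:ℂ) * z0 * ((starRingEnd ℂ) z0)^2 * w * (s:ℂ)^2 + (7:ℂ) * z0 * ((starRingEnd ℂ) z0)^2 * w^2 * ((starRingEnd ℂ) w) * (s:ℂ)^2 + (-3:ℂ) * z0 * ((starRingEnd ℂ) z0)^3 * w^2 * (s:ℂ)^2 + (-1:ℂ) * z0^2 * ((starRingEnd ℂ) w)^2 * (s:ℂ) + z0^2 * ((starRingEnd ℂ) w)^2 * (s:ℂ)^2 + (-2:ℂ) * z0^2 * w * ((starRingEnd ℂ) w)^3 * (s:ℂ)^2 + z0^2 * ((starRingEnd ℂ) z0) * ((starRingEnd ℂ) w) * (s:ℂ) + (-2:ℂ) * z0^2 * ((starRingEnd ℂ) z0) * ((starRingEnd ℂ) w) * (s:ℂ)^2 + (7:ℂ) * z0^2 * ((starRingEnd ℂ) z0) * w * ((starRingEnd ℂ) w)^2 * (s:ℂ)^2 + z0^2 * ((starRingEnd ℂ) z0)^2 * (s:ℂ)^2 + (-8:ℂ) * z0^2 * ((starRingEnd ℂ) z0)^2 * w * ((starRingEnd ℂ) w) * (s:ℂ)^2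 + (3:ℂ) * z0^2 * ((starRingEnd ℂ) z0)^3 * w * (s:ℂ)^2 + z0^3 * ((starRingEnd ℂ) w)^3 * (s:ℂ)^2 + (-3:ℂ) * z0^3 * ((starRingEnd ℂ) z0) * ((starRingEnd ℂ) w)^2 * (s:ℂ)^2 + (3:ℂ) * z0^3 * ((starRingEnd ℂ) z0)^2 * ((starRingEnd ℂ) w) * (s:ℂ)^2 + (-1:ℂ) * z0^3 * ((starRingEnd ℂ) z0)^3 * (s:ℂ)^2 + (-1:ℂ) * ((starRingEnd ℂ) ζ) * w^3 * ((starRingEnd ℂ) w)^2 * (s:ℂ)^2 + (2:ℂ) * ((starRingEnd ℂ) ζ) * ((starRingEnd ℂ) z0) * w^3 * ((starRingEnd ℂ) w) * (s:ℂ)^2 + (-1:ℂ) * ((starRingEnd ℂ) ζ) * ((starRingEnd ℂ) z0)^2 * w^3 * (s:ℂ)^2 + (-1:ℂ) * ((starRingEnd ℂ) ζ) * z0 * w * ((starRingEnd ℂ) w) * (s:ℂ) + (2:ℂ) * ((starRingEnd ℂ) ζ) * z0 * w^2 * ((starRingEnd ℂ) w)^2 * (s:ℂ)^2 + ((starRingEnd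 ℂ) ζ) * z0 * ((starRingEnd ℂ) z0) * w * (s:ℂ) + (-4:ℂ) * ((starRingEnd ℂ) ζ) * z0 * ((starRingEnd ℂ) z0) * w^2 * ((starRingEnd ℂ) w) * (s:ℂ)^2 + (2:ℂ) * ((starRingEnd ℂ) ζ) * z0 * ((starRingEnd ℂ) z0)^2 * w^2 * (s:ℂ)^2 + ((starRingEnd ℂ) ζ) * z0^2 * ((starRingEnd ℂ) w) * (s:ℂ) + (-1:ℂ) * ((starRingEnd ℂ) ζ) * z0^2 * w * ((starRingEnd ℂ) w)^2 * (s:ℂ)^2 + (-1:ℂ) * ((starRingEnd ℂ) ζ) * z0^2 * ((starRingEnd ℂ) z0) * (s:ℂ) + (2:ℂ) * ((starRingEnd ℂ) ζ) * z0^2 * ((starRingEnd ℂ) z0) * w * ((starRingEnd ℂ) w) * (s:ℂ)^2 + (-1:ℂ) * ((starRingEnd ℂ) ζ) * z0^2 * ((starRingEnd ℂ) z0)^2 * w * (s:ℂ)^2 + (-1:ℂ) * ζ * w^2 * ((starRingEnd ℂ) w)^3 * (s:ℂ)^2 + (-1:ℂ) * ζ * ((starRingEnd ℂ) z0) * w *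 ((starRingEnd ℂ) w) * (s:ℂ) + (2:ℂ) * ζ * ((starRingEnd ℂ) z0) * w^2 * ((starRingEnd ℂ) w)^2 * (s:ℂ)^2 + ζ * ((starRingEnd ℂ) z0)^2 * w * (s:ℂ) + (-1:ℂ) * ζ * ((starRingEnd ℂ) z0)^2 * w^2 * ((starRingEnd ℂ) w) * (s:ℂ)^2 + (2:ℂ) * ζ * z0 * w * ((starRingEnd ℂ) w)^3 * (s:ℂ)^2 + ζ * z0 * ((starRingEnd ℂ) z0) * ((starRingEnd ℂ) w) * (s:ℂ) + (-4:ℂ) * ζ * z0 * ((starRingEnd ℂ) z0) * w * ((starRingEnd ℂ) w)^2 * (s:ℂ)^2 + (-1:ℂ) * ζ * z0 * ((starRingEnd ℂ) z0)^2 * (s:ℂ) + (2:ℂ) * ζ * z0 * ((starRingEnd ℂ) z0)^2 * w * ((starRingEnd ℂ) w) * (s:ℂ)^2 + (-1:ℂ) * ζ * z0^2 * ((starRingEnd ℂ) w)^3 * (s:ℂ)^2 + (2:ℂ) * ζ * z0^2 * ((starRingEnd ℂ) z0) * ((starRingEnd ℂ) w)^2 * (s:ℂ)^2 + (-1:ℂ)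 * ζ * z0^2 * ((starRingEnd ℂ) z0)^2 * ((starRingEnd ℂ) w) * (s:ℂ)^2) * hz0z0
lemma exists_w' (w z0 : ℂ) (hw0 : 0 < ‖w‖) (hw1 : ‖w‖ < 1)
    (hz0 : ‖z0‖ = 1) (E : Set ℂ) (hEne : E.Nonempty) (hEc : IsCompact E)
    (hz0E : z0 ∉ E)
    (master : ∀ (s : ℝ) (ζ : ℂ), ζ ∈ E →
      Complex.normSq (ζ - w) * Complex.normSq (z0 - (w + (-(s:ℂ)) * (starRingEnd ℂ) z0 * (z0 - w)^2))
      - Complex.normSq (z0 - w) * Complex.normSq (ζ - (w + (-(s:ℂ)) * (starRingEnd ℂ) z0 * (z0 - w)^2))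
    = s * Complex.normSq (z0 - w) * Complex.normSq (ζ - z0) * (1 - Complex.normSq w)
      + s^2 * (Complex.normSq (z0 - w))^2 * (Complex.normSq (ζ - w) - Complex.normSq (z0 - w))) :
    ∃ w' : ℂ, 0 < ‖w'‖ ∧ ‖w'‖ < 1 ∧
      ∀ ζ ∈ E, Complex.normSq (z0 - w) * Complex.normSq (ζ - w')
        < Complex.normSq (ζ - w) * Complex.normSq (z0 - w') := by
  obtain ⟨ζd, hζdE, hdmin⟩ := hEc.exists_isMinOn hEne
    ((Complex.continuous_normSq.comp (continuous_id.sub continuous_const)).continuousOn)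
  have hdpos : 0 < Complex.normSq (ζd - z0) :=
    Complex.normSq_pos.mpr (sub_ne_zero.mpr (fun h => hz0E (h ▸ hζdE)))
  set d : ℝ := Complex.normSq (ζd - z0) with hddef
  set r : ℝ := ‖w‖ with hrdef
  have hApos : 0 < Complex.normSq (z0 - w) := by
    refine Complex.normSq_pos.mpr (sub_ne_zero.mpr ?_)
    intro h; rw [h, ← hrdef] at hz0; linarith
  set A : ℝ := Complex.normSq (z0 - w) with hAdef
  have hr1 : 0 < 1 - r^2 := by nlinarith
  set s : ℝ := min (d * (1 - r^2) / (2 * A^2)) (min r (1 - r) / (2 * A)) with hsdef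
  have hspos : 0 < s := by
    apply lt_min
    · positivity
    · apply div_pos (lt_min hw0 (by linarith)) (by positivity)
  set e : ℂ := (-(s:ℂ)) * (starRingEnd ℂ) z0 * (z0 - w)^2 with hedef
  have habse : ‖e‖ = s * A := by
    rw [hedef, norm_mul, norm_mul, norm_pow, Complex.norm_conj, hz0, Complex.sq_norm, ← hAdef]
    simp [abs_of_pos hspos]
  have hsA1 : s * A ≤ r / 2 := by
    have h1 : s ≤ min r (1-r) / (2*A) := min_le_right _ _
    have h2 : min r (1-r) ≤ r := min_le_left _ _
    calc s * A ≤ (min r (1-r) / (2*A)) * A := by nlinarith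
    _ ≤ r / 2 := by
        rw [div_mul_eq_mul_div, div_le_div_iff₀ (by positivity) (by norm_num)]; nlinarith
  have hsA2 : s * A ≤ (1-r) / 2 := by
    have h1 : s ≤ min r (1-r) / (2*A) := min_le_right _ _
    have h2 : min r (1-r) ≤ 1-r := min_le_right _ _
    calc s * A ≤ (min r (1-r) / (2*A)) * A := by nlinarith
    _ ≤ (1-r) / 2 := by
        rw [div_mul_eq_mul_div, div_le_div_iff₀ (by positivity) (by norm_num)]; nlinarith
  refine ⟨w + e, ?_, ?_, ?_⟩
  · have h1 : ‖w‖ ≤ ‖w + e‖ + ‖e‖ := by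
      have := norm_add_le (w + e) (-e)
      simpa using this
    rw [habse, ← hrdef] at h1
    linarith
  · have h2 := norm_add_le w e
    rw [habse, ← hrdef] at h2
    linarith
  · intro ζ hζE
    have hkey := master s ζ hζE
    rw [← hedef] at hkey
    have hd : d ≤ Complex.normSq (ζ - z0) := hdmin hζE
    have hnn : 0 ≤ Complex.normSq (ζ - w) := Complex.normSq_nonneg _
    have hs3 : s * A^2 < d * (1 - r^2) := by
      have hle : s ≤ d * (1 - r^2) / (2 * A^2) := min_le_left _ _
      have hlt : d * (1 - r^2) / (2 * A^2) < d * (1 - r^2) / A^2 :=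
        div_lt_div_of_pos_left (by positivity) (by positivity) (by nlinarith)
      have : s < d * (1 - r^2) / A^2 := lt_of_le_of_lt hle hlt
      calc s * A^2 < (d * (1-r^2) / A^2) * A^2 := mul_lt_mul_of_pos_right this (by positivity)
      _ = d * (1-r^2) := by field_simp
    have hw2 : Complex.normSq w = r^2 := by rw [← Complex.sq_norm, hrdef]
    have h5 : s*A*(s*A^2) < s*A*(d*(1-r^2)) :=
      mul_lt_mul_of_pos_left hs3 (mul_pos hspos hApos)
    have h6 : s*A*d ≤ s*A*Complex.normSq (ζ - z0) :=
      mul_le_mul_of_nonneg_left hd (by positivity)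
    have h7 : (s*A*d)*(1-r^2) ≤ (s*A*Complex.normSq (ζ - z0))*(1-r^2) :=
      mul_le_mul_of_nonneg_right h6 hr1.le
    have h8 : 0 ≤ s^2 * A^2 * Complex.normSq (ζ - w) := by positivity
    rw [hw2] at hkey
    set N1 := Complex.normSq (ζ - (w + e)) with hN1
    set N2 := Complex.normSq (z0 - (w + e)) with hN2
    set N3 := Complex.normSq (ζ - w) with hN3
    set N4 := Complex.normSq (ζ - z0) with hN4
    clear hdmin master
    clear_value s e N1 N2 N3 N4 d r A
    linarith [h5, h7, h8, hkey]
lemma circle_mod (w ζ : ℂ) (hw : w ≠ 0) (hζ : ‖ζ‖ = 1) :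
    ‖ζ - ((starRingEnd ℂ) w)⁻¹‖ * ‖w‖ = ‖ζ - w‖ := by
  have hζζ : ζ * (starRingEnd ℂ) ζ = 1 := unit_mul_conj ζ hζ
  have hcw : (starRingEnd ℂ) w ≠ 0 := by simpa using hw
  have key : (ζ - ((starRingEnd ℂ) w)⁻¹) * (starRingEnd ℂ) w = -(ζ * (starRingEnd ℂ) (ζ - w)) := by
    rw [map_sub]
    field_simp
    linear_combination hζζ
  have h2 := congrArg (‖·‖) key
  simpa [norm_mul, ← map_sub, Complex.norm_conj, hζ] using h2

lemma eval_circle (w ζ : ℂ) (hw : w ≠ 0) (hζ : ‖ζ‖ = 1) :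
    ‖((X - C w) * (X - C ((starRingEnd ℂ) w)⁻¹)).eval ζ‖ * ‖w‖
      = Complex.normSq (ζ - w) := by
  rw [eval_mul, eval_sub, eval_sub, eval_X, eval_C, eval_C, norm_mul, mul_assoc,
    circle_mod w ζ hw hζ, ← sq, Complex.sq_norm]
set_option maxHeartbeats 1000000 in
/-- Step 1 of Markov's correction method: an extremal polynomial has no pair of
zeros symmetric with respect to the unit circle and lying off the circle. -/
theorem extremal_no_symmetric_zeros (n : ℕ) (hn : 1 ≤ n)
    (E : Set ℂ) (hEne : E.Nonempty) (hEclosed : IsClosed E)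
    (hEcirc : E ⊆ {ζ : ℂ | ‖ζ‖ = 1})
    (c : ℝ) (hc : Complex.exp (Complex.I * (c : ℂ)) ∉ E)
    (T : Polynomial ℂ) (hTdeg : T.natDegree ≤ n)
    (hTbd : ∀ ζ ∈ E, ‖T.eval ζ‖ ≤ 1)
    (hText : ∀ P : Polynomial ℂ, P.natDegree ≤ n → (∀ ζ ∈ E, ‖P.eval ζ‖ ≤ 1) →
      ‖P.eval (Complex.exp (Complex.I * (c : ℂ)))‖ ≤
        ‖T.eval (Complex.exp (Complex.I * (c : ℂ)))‖) :
    ¬ ∃ w : ℂ, 0 < ‖w‖ ∧ ‖w‖ < 1 ∧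
      T.eval w = 0 ∧ T.eval (((starRingEnd ℂ) w)⁻¹) = 0 := by
  set z0 := Complex.exp (Complex.I * (c:ℂ)) with hz0def
  have hz0 : ‖z0‖ = 1 := by
    rw [hz0def, Complex.norm_exp]
    simp
  have hEone : ∀ ζ ∈ E, ‖ζ‖ = 1 := fun ζ hζ => hEcirc hζ
  have hT1 : 1 ≤ ‖T.eval z0‖ := by
    have h := hText 1 (by simp) (by intro ζ _; simp)
    simpa using h
  rintro ⟨w, hw0, hw1, hrw, hrv⟩
  have hwne : w ≠ 0 := by
    intro h; rw [h] at hw0; simp at hw0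
  set v : ℂ := ((starRingEnd ℂ) w)⁻¹ with hvdef
  have hwv : w ≠ v := by
    intro h
    have hva : ‖v‖ = (‖w‖)⁻¹ := by
      rw [hvdef, norm_inv, Complex.norm_conj]
    have h2 : ‖w‖ * ‖w‖ = 1 := by
      nth_rewrite 2 [h]
      rw [hva]
      exact mul_inv_cancel₀ hw0.ne'
    nlinarith
  have hdvd : (X - C w) * (X - C v) ∣ T := by
    have h1 : (X - C w) ∣ T := dvd_iff_isRoot.mpr hrw
    have h2 : (X - C v) ∣ T := dvd_iff_isRoot.mpr hrv
    exact (isCoprime_X_sub_C_of_isUnit_sub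
      (IsUnit.mk0 _ (sub_ne_zero.mpr hwv))).mul_dvd h1 h2
  obtain ⟨Q, hTQ⟩ := hdvd
  have hTz0ne : T.eval z0 ≠ 0 := by
    intro h; rw [h] at hT1; simp at hT1; linarith
  have hT0 : T ≠ 0 := fun h => hTz0ne (by rw [h]; simp)
  have hQ0 : Q ≠ 0 := by
    intro h; rw [h, mul_zero] at hTQ; exact hT0 hTQ
  have hQz0 : Q.eval z0 ≠ 0 := by
    intro h
    apply hTz0ne
    rw [hTQ, eval_mul, h, mul_zero]
  have hEcomp : IsCompact E := by
    refine (isCompact_sphere (0:ℂ) 1).of_isClosed_subset hEclosed (fun ζ hζ => ?_)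
    rw [mem_sphere_zero_iff_norm]
    exact hEone ζ hζ
  obtain ⟨w', hw'0, hw'1, hkeyE⟩ := exists_w' w z0 hw0 hw1 hz0 E hEne hEcomp hc
    (fun s ζ hζE => master_identity w z0 ζ s (hEone ζ hζE) hz0)
  have hw'ne : w' ≠ 0 := by
    intro h; rw [h] at hw'0; simp at hw'0
  set v' : ℂ := ((starRingEnd ℂ) w')⁻¹ with hv'def
  have hNw' : ∀ ζ ∈ E, 0 < Complex.normSq (ζ - w') := by
    intro ζ hζ
    refine Complex.normSq_pos.mpr (sub_ne_zero.mpr ?_)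
    intro h; rw [h] at hζ; have := hEone _ hζ; linarith
  have hNw : ∀ ζ ∈ E, 0 < Complex.normSq (ζ - w) := by
    intro ζ hζ
    refine Complex.normSq_pos.mpr (sub_ne_zero.mpr ?_)
    intro h; rw [h] at hζ; have := hEone _ hζ; linarith
  have hcont : ContinuousOn (fun ζ : ℂ => Complex.normSq (ζ - w) / Complex.normSq (ζ - w')) E := by
    apply ContinuousOn.div
    · exact (Complex.continuous_normSq.comp (continuous_id.sub continuous_const)).continuousOn
    · exact (Complex.continuous_normSq.comp (continuous_id.sub continuous_const)).continuousOn
    · exact fun ζ hζ => (hNw' ζ hζ).ne'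
  obtain ⟨ζm, hζmE, hψmin⟩ := hEcomp.exists_isMinOn hEne hcont
  have hψ : ∀ ζ ∈ E, Complex.normSq (ζm - w) * Complex.normSq (ζ - w')
      ≤ Complex.normSq (ζ - w) * Complex.normSq (ζm - w') := by
    intro ζ hζ
    have h : Complex.normSq (ζm - w) / Complex.normSq (ζm - w')
        ≤ Complex.normSq (ζ - w) / Complex.normSq (ζ - w') := hψmin hζ
    rw [div_le_div_iff₀ (hNw' ζm hζmE) (hNw' ζ hζ)] at h
    linarith
  set κ : ℝ := ‖w'‖ * Complex.normSq (ζm - w) /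
    (‖w‖ * Complex.normSq (ζm - w')) with hκdef
  have hκpos : 0 < κ :=
    div_pos (mul_pos hw'0 (hNw ζm hζmE)) (mul_pos hw0 (hNw' ζm hζmE))
  have hκC : (κ:ℂ) ≠ 0 := by exact_mod_cast hκpos.ne'
  have hκmul : κ * (‖w‖ * Complex.normSq (ζm - w'))
      = ‖w'‖ * Complex.normSq (ζm - w) := by
    rw [hκdef, div_mul_cancel₀]
    exact (mul_pos hw0 (hNw' ζm hζmE)).ne'
  clear_value κ
  set P : Polynomial ℂ := C (κ:ℂ) * ((X - C w') * (X - C v') * Q) with hPdef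
  clear_value P
  have hSdeg : ((X - C w) * (X - C v)).natDegree = 2 := by
    rw [natDegree_mul (X_sub_C_ne_zero w) (X_sub_C_ne_zero v), natDegree_X_sub_C,
      natDegree_X_sub_C]
  have hS'deg : ((X - C w') * (X - C v')).natDegree = 2 := by
    rw [natDegree_mul (X_sub_C_ne_zero w') (X_sub_C_ne_zero v'), natDegree_X_sub_C,
      natDegree_X_sub_C]
  have hTdeg2 : T.natDegree = 2 + Q.natDegree := by
    rw [hTQ, natDegree_mul (mul_ne_zero (X_sub_C_ne_zero w) (X_sub_C_ne_zero v)) hQ0, hSdeg]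
  have hPdeg : P.natDegree ≤ n := by
    rw [hPdef, natDegree_C_mul hκC,
      natDegree_mul (mul_ne_zero (X_sub_C_ne_zero w') (X_sub_C_ne_zero v')) hQ0, hS'deg]
    rw [hTdeg2] at hTdeg
    exact hTdeg
  have hPbd : ∀ ζ ∈ E, ‖P.eval ζ‖ ≤ 1 := by
    intro ζ hζ
    have e1 := eval_circle w' ζ hw'ne (hEone ζ hζ)
    have e2 := eval_circle w ζ hwne (hEone ζ hζ)
    rw [← hv'def] at e1
    rw [← hvdef] at e2
    have hprod := hψ ζ hζ
    have hstep : κ * ‖((X - C w') * (X - C v')).eval ζ‖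
        ≤ ‖((X - C w) * (X - C v)).eval ζ‖ := by
      have hD : 0 < ‖w‖ * Complex.normSq (ζm - w') * ‖w'‖ :=
        mul_pos (mul_pos hw0 (hNw' ζm hζmE)) hw'0
      apply le_of_mul_le_mul_right _ hD
      have lhs_eq : κ * ‖((X - C w') * (X - C v')).eval ζ‖ *
          (‖w‖ * Complex.normSq (ζm - w') * ‖w'‖)
          = ‖w'‖ * (Complex.normSq (ζm - w) * Complex.normSq (ζ - w')) := by
        linear_combination (‖((X - C w') * (X - C v')).eval ζ‖ * ‖w'‖) * hκmul
          + (‖w'‖ * Complex.normSq (ζm - w)) * e1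
      have rhs_eq : ‖((X - C w) * (X - C v)).eval ζ‖ *
          (‖w‖ * Complex.normSq (ζm - w') * ‖w'‖)
          = ‖w'‖ * (Complex.normSq (ζ - w) * Complex.normSq (ζm - w')) := by
        linear_combination (Complex.normSq (ζm - w') * ‖w'‖) * e2
      rw [lhs_eq, rhs_eq]
      exact mul_le_mul_of_nonneg_left hprod (norm_nonneg _)
    calc ‖P.eval ζ‖
        = κ * ‖((X - C w') * (X - C v')).eval ζ‖ * ‖Q.eval ζ‖ := by
          rw [hPdef]
          simp only [eval_mul, eval_C, norm_mul]
          rw [Complex.norm_real, Real.norm_eq_abs, abs_of_pos hκpos]; ring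
      _ ≤ ‖((X - C w) * (X - C v)).eval ζ‖ * ‖Q.eval ζ‖ := by
          exact mul_le_mul_of_nonneg_right hstep (norm_nonneg _)
      _ = ‖T.eval ζ‖ := by rw [hTQ]; simp [eval_mul, norm_mul, mul_assoc]
      _ ≤ 1 := hTbd ζ hζ
  have hstrict : ‖T.eval z0‖ < ‖P.eval z0‖ := by
    have e1 := eval_circle w' z0 hw'ne hz0
    have e2 := eval_circle w z0 hwne hz0
    rw [← hv'def] at e1
    rw [← hvdef] at e2
    have hkey := hkeyE ζm hζmE
    have hstep : ‖((X - C w) * (X - C v)).eval z0‖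
        < κ * ‖((X - C w') * (X - C v')).eval z0‖ := by
      have hD : 0 < ‖w‖ * Complex.normSq (ζm - w') * ‖w'‖ :=
        mul_pos (mul_pos hw0 (hNw' ζm hζmE)) hw'0
      apply lt_of_mul_lt_mul_right _ hD.le
      have rhs_eq : κ * ‖((X - C w') * (X - C v')).eval z0‖ *
          (‖w‖ * Complex.normSq (ζm - w') * ‖w'‖)
          = ‖w'‖ * (Complex.normSq (ζm - w) * Complex.normSq (z0 - w')) := by
        linear_combination (‖((X - C w') * (X - C v')).eval z0‖ * ‖w'‖) * hκmul
          + (‖w'‖ * Complex.normSq (ζm - w)) * e1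
      have lhs_eq : ‖((X - C w) * (X - C v)).eval z0‖ *
          (‖w‖ * Complex.normSq (ζm - w') * ‖w'‖)
          = ‖w'‖ * (Complex.normSq (z0 - w) * Complex.normSq (ζm - w')) := by
        linear_combination (Complex.normSq (ζm - w') * ‖w'‖) * e2
      rw [lhs_eq, rhs_eq]
      exact mul_lt_mul_of_pos_left hkey hw'0
    have hQpos : 0 < ‖Q.eval z0‖ := by
      simpa [norm_pos_iff] using hQz0
    calc ‖T.eval z0‖
        = ‖((X - C w) * (X - C v)).eval z0‖ * ‖Q.eval z0‖ := by
          rw [hTQ]; simp [eval_mul, norm_mul, mul_assoc]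
      _ < κ * ‖((X - C w') * (X - C v')).eval z0‖ * ‖Q.eval z0‖ := by
          exact mul_lt_mul_of_pos_right hstep hQpos
      _ = ‖P.eval z0‖ := by
          rw [hPdef]
          simp only [eval_mul, eval_C, norm_mul]
          rw [Complex.norm_real, Real.norm_eq_abs, abs_of_pos hκpos]; ring
  have hfin := hText P hPdeg hPbd
  linarith
end

section
/- Let n ≥ 1 be an integer, let E be a nonempty closed subset of the unit circle {ζ ∈ ℂ : |ζ| = 1}, and let c ∈ ℝ with e^{ic} ∉ E. Let T be a polynomial of degree at most n with complex coefficients such that |T(ζ)| ≤ 1 for all ζ ∈ E, and suppose T is extremal at e^{ic}: for every polynomial P of degree at most n with |P(ζ)| ≤ 1 for all ζ ∈ E, one has |P(e^{ic})| ≤ |T(e^{ic})|. Then there is no w ∈ ℂ with |w| = 1 and w ≠ e^{ic} such that w is a zero of T of multiplicity at least 2 (i.e., such that (X − w)² divides T). -/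
open MeasureTheory Polynomial

/-- On the unit circle, `(ζ - u)^2 = -(u*ζ) * |ζ - u|^2`. -/
lemma circle_sq_identity (u ζ : ℂ) (hu : ‖u‖ = 1) (hζ : ‖ζ‖ = 1) :
    (ζ - u) ^ 2 = -(u * ζ) * ((Complex.normSq (ζ - u) : ℝ) : ℂ) := by
  have h1 : ζ * (starRingEnd ℂ) ζ = 1 := by
    rw [Complex.mul_conj]
    norm_cast
    simp [← Complex.sq_norm, hζ]
  have h2 : u * (starRingEnd ℂ) u = 1 := by
    rw [Complex.mul_conj]
    norm_cast
    simp [← Complex.sq_norm, hu]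
  have h3 : ((Complex.normSq (ζ - u) : ℝ) : ℂ) = (ζ - u) * (starRingEnd ℂ) (ζ - u) := by
    rw [Complex.mul_conj]
  rw [h3, map_sub]
  linear_combination (u * ζ - u ^ 2) * h1 + (u * ζ - ζ ^ 2) * h2

lemma normSq_le_four_of_abs_one {u v : ℂ} (hu : ‖u‖ = 1) (hv : ‖v‖ = 1) :
    Complex.normSq (u - v) ≤ 4 := by
  have habs2 : ‖u - v‖ ≤ 2 := by
    calc ‖u - v‖ ≤ ‖u‖ + ‖v‖ := norm_sub_le _ _
    _ = 2 := by rw [hu, hv]; norm_num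
  have hsq := Complex.sq_norm (u - v)
  nlinarith [norm_nonneg (u - v)]

lemma sq_le_normSq_of_le {u v : ℂ} {d : ℝ} (h : d ≤ ‖u - v‖) (hd : 0 ≤ d) :
    d ^ 2 ≤ Complex.normSq (u - v) := by
  have hsq := Complex.sq_norm (u - v)
  nlinarith

set_option maxHeartbeats 1000000 in
/-- Step 2 of Markov's correction method: all zeros of an extremal polynomial on the
unit circle (other than the evaluation point) are simple. -/
theorem extremal_simple_zeros_on_circle (n : ℕ) (hn : 1 ≤ n)
    (E : Set ℂ) (hEne : E.Nonempty) (hEclosed : IsClosed E)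
    (hEcirc : E ⊆ {ζ : ℂ | ‖ζ‖ = 1})
    (c : ℝ) (hc : Complex.exp (Complex.I * (c : ℂ)) ∉ E)
    (T : Polynomial ℂ) (hTdeg : T.natDegree ≤ n)
    (hTbd : ∀ ζ ∈ E, ‖T.eval ζ‖ ≤ 1)
    (hText : ∀ P : Polynomial ℂ, P.natDegree ≤ n → (∀ ζ ∈ E, ‖P.eval ζ‖ ≤ 1) →
      ‖P.eval (Complex.exp (Complex.I * (c : ℂ)))‖ ≤
        ‖T.eval (Complex.exp (Complex.I * (c : ℂ)))‖) :
    ¬ ∃ w : ℂ, ‖w‖ = 1 ∧ w ≠ Complex.exp (Complex.I * (c : ℂ)) ∧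
      (Polynomial.X - Polynomial.C w) ^ 2 ∣ T := by
  rintro ⟨w, hw1, hwz, Q, hTQ⟩
  obtain ⟨z, hzdef⟩ : ∃ z : ℂ, z = Complex.exp (Complex.I * (c : ℂ)) := ⟨_, rfl⟩
  rw [← hzdef] at hc hwz hText
  have hz1 : ‖z‖ = 1 := by
    rw [hzdef, Complex.norm_exp]
    simp [Complex.mul_re]
  have hz0 : z ≠ 0 := by
    intro h; rw [h] at hz1; simp at hz1
  -- T does not vanish at z
  have hTz : 1 ≤ ‖T.eval z‖ := by
    simpa using hText 1 (by simp) (by intro ζ hζ; simp)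
  have hT0 : T ≠ 0 := by
    intro h; rw [h] at hTz; norm_num at hTz
  have hQ0 : Q ≠ 0 := by
    intro h; exact hT0 (by rw [hTQ, h, mul_zero])
  -- E is compact
  have hEsub : E ⊆ Metric.sphere (0 : ℂ) 1 := by
    intro ζ hζ
    simpa [Complex.dist_eq] using hEcirc hζ
  have hEcomp : IsCompact E := (isCompact_sphere (0:ℂ) 1).of_isClosed_subset hEclosed hEsub
  -- distance from z to E
  obtain ⟨d, hd0, hdE⟩ : ∃ d : ℝ, 0 < d ∧ ∀ ζ ∈ E, d ≤ ‖ζ - z‖ := by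
    obtain ⟨ζ₀, hζ₀E, hζ₀'⟩ := hEcomp.exists_isMinOn hEne
      ((continuous_norm.comp (continuous_id.sub continuous_const)).continuousOn :
        ContinuousOn (fun ζ : ℂ => ‖ζ - z‖) E)
    refine ⟨‖ζ₀ - z‖, ?_, isMinOn_iff.mp hζ₀'⟩
    simp only [norm_pos_iff, sub_ne_zero]
    intro h; exact hc (h ▸ hζ₀E)
  -- bound for Q on E
  obtain ⟨M, hM0, hMQ⟩ : ∃ M : ℝ, 0 < M ∧ ∀ ζ ∈ E, ‖Q.eval ζ‖ ≤ M := by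
    obtain ⟨ζ₁, hζ₁E, hζ₁'⟩ := hEcomp.exists_isMaxOn hEne
      ((continuous_norm.comp (Polynomial.continuous Q)).continuousOn :
        ContinuousOn (fun ζ : ℂ => ‖Q.eval ζ‖) E)
    refine ⟨‖Q.eval ζ₁‖ + 1, by positivity, fun ζ hζ => ?_⟩
    have h := isMaxOn_iff.mp hζ₁' ζ hζ
    simp only [Function.comp_apply] at h
    linarith
  obtain ⟨δ, hδ0, hδM⟩ : ∃ δ : ℝ, 0 < δ ∧ 4 * δ * M = 1 :=
    ⟨1 / (4 * M), by positivity, by field_simp⟩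
  obtain ⟨η, hη0, hη8⟩ : ∃ η : ℝ, 0 < η ∧ 8 * η = d ^ 2 :=
    ⟨d ^ 2 / 8, by positivity, by ring⟩
  -- the corrected polynomial
  obtain ⟨P, hPdef⟩ : ∃ P : Polynomial ℂ, P =
      (Polynomial.C (((1 + δ * η : ℝ) : ℂ)) * (Polynomial.X - Polynomial.C w) ^ 2 -
        Polynomial.C ((δ : ℂ) * (w / z)) * (Polynomial.X - Polynomial.C z) ^ 2) * Q := ⟨_, rfl⟩
  have hQdeg : Q.natDegree + 2 ≤ n := by
    have h2 : ((Polynomial.X - Polynomial.C w) ^ 2).natDegree = 2 := by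
      simp [natDegree_pow, natDegree_X_sub_C]
    have : T.natDegree = 2 + Q.natDegree := by
      rw [hTQ, natDegree_mul (pow_ne_zero _ (X_sub_C_ne_zero w)) hQ0, h2]
    omega
  have hPdeg : P.natDegree ≤ n := by
    rw [hPdef]
    refine le_trans (natDegree_mul_le) ?_
    have h1 : (Polynomial.C (((1 + δ * η : ℝ) : ℂ)) * (Polynomial.X - Polynomial.C w) ^ 2 -
        Polynomial.C ((δ : ℂ) * (w / z)) * (Polynomial.X - Polynomial.C z) ^ 2).natDegree ≤ 2 := by
      compute_degree
    omega
  -- evaluation identity on the circle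
  have hPeval : ∀ ζ : ℂ, ‖ζ‖ = 1 →
      P.eval ζ = -(w * ζ) * (((1 + δ * η) * Complex.normSq (ζ - w)
        - δ * Complex.normSq (ζ - z) : ℝ) : ℂ) * Q.eval ζ := by
    intro ζ hζ
    rw [hPdef]
    simp only [eval_mul, eval_sub, eval_pow, eval_C, eval_X]
    rw [circle_sq_identity w ζ hw1 hζ, circle_sq_identity z ζ hz1 hζ]
    push_cast
    field_simp
    ring
  -- P is bounded by 1 on E
  have hPbd : ∀ ζ ∈ E, ‖P.eval ζ‖ ≤ 1 := by
    intro ζ hζ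
    have hζ1 : ‖ζ‖ = 1 := hEcirc hζ
    rw [hPeval ζ hζ1]
    obtain ⟨a, hadef⟩ : ∃ a : ℝ, a = Complex.normSq (ζ - w) := ⟨_, rfl⟩
    obtain ⟨b, hbdef⟩ : ∃ b : ℝ, b = Complex.normSq (ζ - z) := ⟨_, rfl⟩
    obtain ⟨q, hqdef⟩ : ∃ q : ℝ, q = ‖Q.eval ζ‖ := ⟨_, rfl⟩
    rw [← hadef, ← hbdef]
    have ha0 : 0 ≤ a := hadef ▸ Complex.normSq_nonneg _
    have hb0 : 0 ≤ b := hbdef ▸ Complex.normSq_nonneg _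
    have hq0 : 0 ≤ q := hqdef ▸ norm_nonneg _
    have hqM : q ≤ M := hqdef ▸ hMQ ζ hζ
    have ha4 : a ≤ 4 := hadef ▸ normSq_le_four_of_abs_one hζ1 hw1
    have hbd : d ^ 2 ≤ b := hbdef ▸ sq_le_normSq_of_le (hdE ζ hζ) hd0.le
    have haq : a * q ≤ 1 := by
      have hb := hTbd ζ hζ
      rw [hTQ] at hb
      rw [hadef, hqdef, ← Complex.sq_norm]
      simpa [norm_mul, norm_pow] using hb
    -- compute the absolute value
    have habs : ‖-(w * ζ) * (((1 + δ * η) * a - δ * b : ℝ) : ℂ) * Q.eval ζ‖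
        = |(1 + δ * η) * a - δ * b| * q := by
      rw [norm_mul, norm_mul, norm_neg, norm_mul, hw1, hζ1, Complex.norm_real, Real.norm_eq_abs, hqdef]
      ring
    rw [habs]
    rcases abs_cases ((1 + δ * η) * a - δ * b) with ⟨h1, h2⟩ | ⟨h1, h2⟩
    · -- nonnegative case: expression ≤ a, so value ≤ a*q ≤ 1
      have hr : (1 + δ * η) * a - δ * b ≤ a := by
        have h4 : 2 * η * a ≤ b := by
          nlinarith [mul_nonneg hη0.le (sub_nonneg.mpr ha4)]
        have hba : δ * (2 * η * a) ≤ δ * b := mul_le_mul_of_nonneg_left h4 hδ0.le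
        nlinarith [mul_nonneg (mul_nonneg hδ0.le hη0.le) ha0]
      calc |(1 + δ * η) * a - δ * b| * q ≤ a * q := by
            rw [h1]; exact mul_le_mul_of_nonneg_right hr hq0
        _ ≤ 1 := haq
    · -- negative case: |expr| ≤ δ*b ≤ 4δ, so value ≤ 4δM = 1
      have hb4 : b ≤ 4 := hbdef ▸ normSq_le_four_of_abs_one hζ1 hz1
      have hr : |(1 + δ * η) * a - δ * b| ≤ 4 * δ := by
        rw [h1]
        have h5 : δ * b ≤ δ * 4 := mul_le_mul_of_nonneg_left hb4 hδ0.le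
        have h6 : 0 ≤ (1 + δ * η) * a := mul_nonneg (by positivity) ha0
        linarith
      calc |(1 + δ * η) * a - δ * b| * q ≤ (4 * δ) * M := by
            apply mul_le_mul hr hqM hq0; positivity
        _ = 1 := hδM
  -- evaluation at z strictly increases: contradiction with extremality
  have hPz : P.eval z = (((1 + δ * η : ℝ) : ℂ)) * T.eval z := by
    rw [hPdef, hTQ]
    simp only [eval_mul, eval_sub, eval_pow, eval_C, eval_X]
    ring
  have hfinal := hText P hPdeg hPbd
  rw [hPz, norm_mul, Complex.norm_real, Real.norm_eq_abs] at hfinal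
  have h1 : |1 + δ * η| = 1 + δ * η := abs_of_pos (by positivity)
  rw [h1] at hfinal
  nlinarith [hTz, mul_pos hδ0 hη0]
end
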